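/- arXiv:1010.0450 — 3 statements merged into one kernel-verified Lean document; each statement's English description precedes it below -/
import Mathlib

section
/- For every n ≥ 2 and every k ∈ {1,…,n−1}, the ring endomorphism φ_{σ_k} of the algebra Ã⁰ₙ is bijective; that is, φ_{σ_k} is a ring automorphism of Ã⁰ₙ. -/
/-!
STATEMENT 0: For every n ≥ 2 and every k ∈ {1,…,n−1}, the ring endomorphism φ_{σ_k}
of Ã⁰ₙ (the free unital associative algebra over ℤ[μ̃₁^{±1},…,μ̃ₙ^{±1}] on generators
a_{ij}, i ≠ j) is bijective, i.e. it is a ring automorphism.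

We model the Laurent polynomial ring ℤ[μ̃₁^{±1},…,μ̃ₙ^{±1}] as the monoid algebra of
the free abelian group `Fin n → ℤ` over ℤ (`mtZ i z` is the monomial `μ̃ᵢ^z`), and
Ã⁰ₙ as the free algebra over it on the off-diagonal pairs (i,j).  `IsPhiSigma`
records exactly the defining equations for φ_{σ_k} on the generators a_{ij} and on
the coefficients μ̃ᵢ^{±1}; these determine the ring endomorphism uniquely.
(Indices are 0-based: k and k' = k+1 play the roles of k, k+1.)
-/

noncomputable section

abbrev LaurN (N : ℕ) : Type := AddMonoidAlgebra ℤ (Fin N → ℤ)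

/-- the monomial `μ̃ᵢ^z` in `ℤ[μ̃₁^{±1},…,μ̃_N^{±1}]`. -/
def mtZ {N : ℕ} (i : Fin N) (z : ℤ) : LaurN N := AddMonoidAlgebra.single (Pi.single i z) 1

abbrev OffD (N : ℕ) := {p : Fin N × Fin N // p.1 ≠ p.2}

/-- The algebra `Ã⁰_N`: free unital associative algebra over `ℤ[μ̃₁^{±1},…,μ̃_N^{±1}]`
on the generators `a_{ij}`, `i ≠ j`. -/
abbrev Atil (N : ℕ) := FreeAlgebra (LaurN N) (OffD N)

/-- `μ̃ᵢ^z` viewed inside `Ã⁰_N`. -/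
def mtA {N : ℕ} (i : Fin N) (z : ℤ) : Atil N := algebraMap _ _ (mtZ i z)

/-- The generator `a_{ij}` of `Ã⁰_N` (and `0` for the unused case `i = j`). -/
def aG {N : ℕ} (i j : Fin N) : Atil N := if h : i = j then 0 else FreeAlgebra.ι _ ⟨(i,j), h⟩

/-- The defining property of the ring endomorphism `φ_{σ_k}` of `Ã⁰_N`. -/
def IsPhiSigma (N : ℕ) (k : Fin N) (hk : (k : ℕ) + 1 < N) (φ : Atil N →+* Atil N) : Prop :=
  ∃ k' : Fin N, ((k' : ℕ) = (k : ℕ) + 1) ∧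
  ((∀ i j : Fin N, i ≠ k → i ≠ k' → j ≠ k → j ≠ k' → φ (aG i j) = aG i j) ∧
   (φ (aG k k') = - aG k' k) ∧
   (φ (aG k' k) = - (mtA k 1 * mtA k' (-1) * aG k k')) ∧
   (∀ i : Fin N, i ≠ k → i ≠ k' → φ (aG i k') = aG i k) ∧
   (∀ i : Fin N, i ≠ k → i ≠ k' → φ (aG k' i) = aG k i) ∧
   (∀ i : Fin N, i < k → φ (aG i k) = aG i k' - aG i k * aG k k') ∧
   (∀ i : Fin N, k' < i → φ (aG i k) = aG i k' - mtA k 1 * mtA k' (-1) * (aG i k * aG k k')) ∧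
   (∀ i : Fin N, i ≠ k → i ≠ k' → φ (aG k i) = aG k' i - aG k' k * aG k i) ∧
   (φ (mtA k 1) = mtA k' 1) ∧ (φ (mtA k (-1)) = mtA k' (-1)) ∧
   (φ (mtA k' 1) = mtA k 1) ∧ (φ (mtA k' (-1)) = mtA k (-1)) ∧
   (∀ i : Fin N, i ≠ k → i ≠ k' → φ (mtA i 1) = mtA i 1 ∧ φ (mtA i (-1)) = mtA i (-1)))

namespace PhiAux

variable {N : ℕ}

lemma mtZ_mul (i : Fin N) (a b : ℤ) : mtZ i a * mtZ i b = mtZ i (a + b) := by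
  rw [mtZ, mtZ, mtZ, AddMonoidAlgebra.single_mul_single, one_mul, ← Pi.single_add]

lemma mtZ_zero (i : Fin N) : mtZ i 0 = 1 := by
  rw [mtZ, Pi.single_zero]; rfl

/-- a general monomial in the Laurent ring. -/
def mtM (v : Fin N → ℤ) : LaurN N := AddMonoidAlgebra.single v 1

lemma mtM_zero : mtM (0 : Fin N → ℤ) = 1 := rfl

lemma mtM_add (v w : Fin N → ℤ) : mtM (v + w) = mtM v * mtM w := by
  rw [mtM, mtM, mtM, AddMonoidAlgebra.single_mul_single, one_mul]

lemma mtM_single (i : Fin N) (z : ℤ) : mtM (Pi.single i z) = mtZ i z := rfl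

lemma smul_mtM (v : Fin N → ℤ) (b : ℤ) : b • mtM v = AddMonoidAlgebra.single v b := by
  rw [mtM, AddMonoidAlgebra.smul_single', mul_one]

lemma keyA (i j : Fin N) : mtZ i 1 * mtZ j (-1) * (mtZ j 1 * mtZ i (-1)) = 1 := by
  rw [mul_comm (mtZ j 1) (mtZ i (-1)), mul_mul_mul_comm, mtZ_mul, mtZ_mul]
  norm_num [mtZ_zero]

lemma mtA_smul (i : Fin N) (z : ℤ) (x : Atil N) : mtA i z * x = mtZ i z • x :=
  (Algebra.smul_def _ _).symm

lemma smul_mtA (i : Fin N) (z : ℤ) (x : Atil N) : x * mtA i z = mtZ i z • x := by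
  rw [mtA, ← Algebra.commutes, Algebra.smul_def]

/-- the coordinate swap as an additive automorphism of `Fin N → ℤ`. -/
def swE (k k' : Fin N) : (Fin N → ℤ) ≃+ (Fin N → ℤ) where
  toFun f := f ∘ Equiv.swap k k'
  invFun f := f ∘ Equiv.swap k k'
  left_inv f := by funext j; simp [Function.comp, Equiv.swap_apply_self]
  right_inv f := by funext j; simp [Function.comp, Equiv.swap_apply_self]
  map_add' f g := rfl

lemma swE_single (k k' i : Fin N) (z : ℤ) :
    swE k k' (Pi.single i z) = Pi.single (Equiv.swap k k' i) z := by
  have hco : ∀ f : Fin N → ℤ, swE k k' f = f ∘ Equiv.swap k k' := fun _ => rfl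
  funext j
  rw [hco, Function.comp_apply]
  rcases eq_or_ne j (Equiv.swap k k' i) with h | h
  · subst h
    rw [Equiv.swap_apply_self, Pi.single_eq_same, Pi.single_eq_same]
  · rw [Pi.single_eq_of_ne h, Pi.single_eq_of_ne]
    intro hc
    exact h (by rw [← hc, Equiv.swap_apply_self])

/-- the swap automorphism of the Laurent ring. -/
def sigmaR (k k' : Fin N) : LaurN N →+* LaurN N :=
  ((AddMonoidAlgebra.domCongr ℤ ℤ (swE k k')).toAlgHom : LaurN N →ₐ[ℤ] LaurN N).toRingHom

lemma sigmaR_mtZ (k k' i : Fin N) (z : ℤ) :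
    sigmaR k k' (mtZ i z) = mtZ (Equiv.swap k k' i) z := by
  show AddMonoidAlgebra.domCongr ℤ ℤ (swE k k') (AddMonoidAlgebra.single (Pi.single i z) 1)
      = AddMonoidAlgebra.single (Pi.single (Equiv.swap k k' i) z) 1
  rw [AddMonoidAlgebra.domCongr_single, swE_single]

/-- the images of the generators under the inverse `ψ` of `φ_{σ_k}`. -/
def psiGen (k k' : Fin N) (p : OffD N) : Atil N :=
  if p.1.2 = k then (if p.1.1 = k' then -aG k k' else aG p.1.1 k')
  else if p.1.2 = k' then
    (if p.1.1 = k then -(mtA k 1 * mtA k' (-1) * aG k' k)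
     else if p.1.1 < k then aG p.1.1 k - mtA k 1 * mtA k' (-1) * (aG p.1.1 k' * aG k' k)
     else aG p.1.1 k - aG p.1.1 k' * aG k' k)
  else if p.1.1 = k then aG k' p.1.2
  else if p.1.1 = k' then aG k p.1.2 - aG k k' * aG k' p.1.2
  else aG p.1.1 p.1.2

/-- the algebra structure on `Atil N` twisted by the swap of the base ring. -/
def twAlg (k k' : Fin N) : Algebra (LaurN N) (Atil N) :=
  RingHom.toAlgebra' ((algebraMap (LaurN N) (Atil N)).comp (sigmaR k k'))
    (fun r x => Algebra.commutes (sigmaR k k' r) x)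

/-- the inverse `ψ` of `φ_{σ_k}` as a ring homomorphism. -/
def psi (k k' : Fin N) : Atil N →+* Atil N :=
  @AlgHom.toRingHom (LaurN N) (Atil N) (Atil N) _ _ _ _ (twAlg k k')
    (@FreeAlgebra.lift (LaurN N) (OffD N) _ (Atil N) _ (twAlg k k') (psiGen k k'))

lemma psi_apply (k k' : Fin N) (x : Atil N) :
    psi k k' x = (@FreeAlgebra.lift (LaurN N) (OffD N) _ (Atil N) _ (twAlg k k') (psiGen k k')) x :=
  rfl

lemma psi_ι (k k' : Fin N) (p : OffD N) : psi k k' (FreeAlgebra.ι _ p) = psiGen k k' p := by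
  rw [psi_apply]
  exact @FreeAlgebra.lift_ι_apply (LaurN N) (OffD N) _ (Atil N) _ (twAlg k k') (psiGen k k') p

lemma psi_algebraMap (k k' : Fin N) (r : LaurN N) :
    psi k k' (algebraMap (LaurN N) (Atil N) r) = algebraMap (LaurN N) (Atil N) (sigmaR k k' r) := by
  have h := @AlgHom.commutes (LaurN N) (Atil N) (Atil N) _ _ _ _ (twAlg k k')
    (@FreeAlgebra.lift (LaurN N) (OffD N) _ (Atil N) _ (twAlg k k') (psiGen k k')) r
  rw [show @algebraMap (LaurN N) (Atil N) _ _ (twAlg k k')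
      = (algebraMap (LaurN N) (Atil N)).comp (sigmaR k k') from
      RingHom.algebraMap_toAlgebra' _ _, RingHom.comp_apply] at h
  rw [psi_apply]
  exact h

lemma psi_mtA (k k' i : Fin N) (z : ℤ) :
    psi k k' (mtA i z) = mtA (Equiv.swap k k' i) z := by
  rw [mtA, psi_algebraMap, sigmaR_mtZ, mtA]

lemma aG_eq (i j : Fin N) (h : i ≠ j) : aG i j = FreeAlgebra.ι _ (⟨(i,j), h⟩ : OffD N) :=
  dif_neg h

lemma psi_aG (k k' i j : Fin N) (h : i ≠ j) :
    psi k k' (aG i j) = psiGen k k' ⟨(i,j), h⟩ := by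
  rw [aG_eq i j h, psi_ι]

variable {k k' : Fin N} (hlt : k < k')

include hlt

lemma psi_aG_kk' : psi k k' (aG k k') = -(mtA k 1 * mtA k' (-1) * aG k' k) := by
  rw [psi_aG k k' k k' hlt.ne]
  simp [psiGen, hlt.ne, hlt.ne']

lemma psi_aG_k'k : psi k k' (aG k' k) = -aG k k' := by
  rw [psi_aG k k' k' k hlt.ne']
  simp [psiGen]

lemma psi_aG_ik (i : Fin N) (hik : i ≠ k) (hik' : i ≠ k') :
    psi k k' (aG i k) = aG i k' := by
  rw [psi_aG k k' i k hik]
  simp [psiGen, hik']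

lemma psi_aG_kj (j : Fin N) (hjk : j ≠ k) (hjk' : j ≠ k') :
    psi k k' (aG k j) = aG k' j := by
  rw [psi_aG k k' k j (Ne.symm hjk)]
  simp [psiGen, hjk, hjk']

lemma psi_aG_ik'_lt (i : Fin N) (hik : i < k) :
    psi k k' (aG i k') = aG i k - mtA k 1 * mtA k' (-1) * (aG i k' * aG k' k) := by
  rw [psi_aG k k' i k' (hik.trans hlt).ne]
  simp [psiGen, hik, hik.ne, hlt.ne', (hik.trans hlt).ne]

lemma psi_aG_ik'_gt (i : Fin N) (hik : k' < i) :
    psi k k' (aG i k') = aG i k - aG i k' * aG k' k := by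
  rw [psi_aG k k' i k' hik.ne']
  simp [psiGen, (hlt.trans hik).ne', hik.ne', hlt.ne', not_lt_of_gt (hlt.trans hik)]

lemma psi_aG_k'j (j : Fin N) (hjk : j ≠ k) (hjk' : j ≠ k') :
    psi k k' (aG k' j) = aG k j - aG k k' * aG k' j := by
  rw [psi_aG k k' k' j (Ne.symm hjk')]
  simp [psiGen, hjk, hjk', hlt.ne']

lemma psi_aG_out (i j : Fin N) (hij : i ≠ j) (hik : i ≠ k) (hik' : i ≠ k')
    (hjk : j ≠ k) (hjk' : j ≠ k') : psi k k' (aG i j) = aG i j := by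
  rw [psi_aG k k' i j hij]
  simp [psiGen, hik, hik', hjk, hjk']

omit hlt

/-- two ring endomorphisms of `Atil N` agreeing on the generators and on the
monomials `μ̃ᵢ^(±1)` are equal. -/
lemma ringHom_ext_on_gens (f g : Atil N →+* Atil N)
    (ha : ∀ (i j : Fin N), i ≠ j → f (aG i j) = g (aG i j))
    (hm : ∀ i : Fin N, f (mtA i 1) = g (mtA i 1) ∧ f (mtA i (-1)) = g (mtA i (-1))) :
    f = g := by
  have hmz : ∀ (i : Fin N) (z : ℤ), f (mtA i z) = g (mtA i z) := by
    intro i z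
    induction z using Int.induction_on with
    | zero =>
        have h0 : mtA i 0 = 1 := by rw [mtA, mtZ_zero, map_one]
        rw [h0, map_one, map_one]
    | succ m ih =>
        have : mtA i (m + 1) = mtA i m * mtA i 1 := by
          rw [mtA, mtA, mtA, ← map_mul, mtZ_mul]
        rw [this, map_mul, map_mul, ih, (hm i).1]
    | pred m ih =>
        have : mtA i (-(m : ℤ) - 1) = mtA i (-m) * mtA i (-1) := by
          rw [mtA, mtA, mtA, ← map_mul, mtZ_mul, sub_eq_add_neg]
        rw [this, map_mul, map_mul, ih, (hm i).2]
  have halg : ∀ r : LaurN N, f (algebraMap (LaurN N) (Atil N) r)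
      = g (algebraMap (LaurN N) (Atil N) r) := by
    have hp : ∀ (c : Fin N → ℤ) (s : Finset (Fin N)),
        f (algebraMap (LaurN N) (Atil N) (mtM (∑ i ∈ s, Pi.single i (c i))))
        = g (algebraMap (LaurN N) (Atil N) (mtM (∑ i ∈ s, Pi.single i (c i)))) := by
      intro c s
      induction s using Finset.induction_on with
      | empty =>
          rw [Finset.sum_empty, mtM_zero, map_one, map_one, map_one]
      | insert a s hnotmem ih =>
          rw [Finset.sum_insert hnotmem, mtM_add, mtM_single, map_mul, map_mul, map_mul, ih]
          have hh := hmz a (c a)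
          rw [mtA] at hh
          rw [hh]
    have hs1 : ∀ c : Fin N → ℤ,
        f (algebraMap (LaurN N) (Atil N) (mtM c))
        = g (algebraMap (LaurN N) (Atil N) (mtM c)) := by
      intro c
      have h := hp c Finset.univ
      rwa [Finset.univ_sum_single] at h
    intro r
    induction r using AddMonoidAlgebra.induction with
    | zero => rw [map_zero, map_zero, map_zero]
    | single_add c b r _ _ ih =>
        rw [map_add, map_add, map_add, ih, ← smul_mtM, map_zsmul, map_zsmul, map_zsmul, hs1 c]
  apply RingHom.ext
  intro x
  induction x using FreeAlgebra.induction with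
  | grade0 r => exact halg r
  | grade1 p =>
      obtain ⟨⟨i, j⟩, hij⟩ := p
      rw [← aG_eq i j hij]
      exact ha i j hij
  | mul a b iha ihb => rw [map_mul, map_mul, iha, ihb]
  | add a b iha ihb => rw [map_add, map_add, iha, ihb]

end PhiAux

namespace PhiAux

variable {N : ℕ}

lemma mtA_pair (i j : Fin N) :
    mtA i 1 * mtA j (-1) = algebraMap (LaurN N) (Atil N) (mtZ i 1 * mtZ j (-1)) := by
  rw [map_mul, mtA, mtA]

lemma mtA_cancel (i j : Fin N) (x : Atil N) :
    mtA i 1 * mtA j (-1) * (mtA j 1 * mtA i (-1) * x) = x := by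
  rw [mtA_pair, mtA_pair, ← mul_assoc, ← map_mul, keyA, map_one, one_mul]

lemma mul_negA (a b : Atil N) : a * -b = -(a * b) := mul_neg a b

lemma neg_mulA (a b : Atil N) : -a * b = -(a * b) := neg_mul a b

lemma neg_negA (a : Atil N) : - -a = a := neg_neg a

lemma central_move (i j : Fin N) (x y : Atil N) :
    x * (mtA i 1 * mtA j (-1) * y) = mtA i 1 * mtA j (-1) * (x * y) := by
  rw [mtA_pair, ← mul_assoc, ← Algebra.commutes, mul_assoc]

end PhiAux

/-- For n ≥ 2 and 1 ≤ k ≤ n−1, the ring endomorphism `φ_{σ_k}` of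
`Ã⁰ₙ` is bijective, i.e. a ring automorphism. -/
theorem phi_sigma_bijective (n : ℕ) (hn : 2 ≤ n) (k : Fin n) (hk : (k : ℕ) + 1 < n)
    (φ : Atil n →+* Atil n) (hφ : IsPhiSigma n k hk φ) :
    Function.Bijective φ := by
  open PhiAux in
  obtain ⟨k', hk'v, h1, h2, h3, h4, h5, h6, h7, h8, hm1, hm2, hm3, hm4, hm5⟩ := hφ
  have hlt : k < k' := by rw [Fin.lt_def, hk'v]; omega
  have tri : ∀ i : Fin n, i ≠ k → i ≠ k' → (i < k ∨ k' < i) := by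
    intro i hik hik'
    have e1 : (i : ℕ) ≠ (k : ℕ) := fun h => hik (Fin.val_injective h)
    have e2 : (i : ℕ) ≠ (k' : ℕ) := fun h => hik' (Fin.val_injective h)
    rw [Fin.lt_def, Fin.lt_def]
    omega
  have hpsiφ : (PhiAux.psi k k').comp φ = RingHom.id (Atil n) := by
    apply PhiAux.ringHom_ext_on_gens
    · intro i j hij
      simp only [RingHom.coe_comp, Function.comp_apply, RingHom.id_apply]
      by_cases hjk : j = k
      · subst hjk
        by_cases hik' : i = k'
        · subst hik'
          rw [h3, map_neg, map_mul, map_mul, PhiAux.psi_mtA, PhiAux.psi_mtA,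
            Equiv.swap_apply_left, Equiv.swap_apply_right, PhiAux.psi_aG_kk' hlt,
            PhiAux.mul_negA, PhiAux.mtA_cancel, PhiAux.neg_negA]
        · rcases tri i hij hik' with hl | hg
          · rw [h6 i hl, map_sub, map_mul, PhiAux.psi_aG_ik'_lt hlt i hl,
              PhiAux.psi_aG_ik hlt i hij hik', PhiAux.psi_aG_kk' hlt,
              PhiAux.mul_negA, PhiAux.central_move]
            abel
          · rw [h7 i hg, map_sub, map_mul, map_mul, map_mul, PhiAux.psi_mtA, PhiAux.psi_mtA,
              Equiv.swap_apply_left, Equiv.swap_apply_right,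
              PhiAux.psi_aG_ik'_gt hlt i hg, PhiAux.psi_aG_ik hlt i hij hik',
              PhiAux.psi_aG_kk' hlt, PhiAux.mul_negA, PhiAux.central_move, PhiAux.mul_negA,
              PhiAux.mtA_cancel]
            abel
      · by_cases hjk' : j = k'
        · subst hjk'
          by_cases hik : i = k
          · subst hik
            rw [h2, map_neg, PhiAux.psi_aG_k'k hlt, PhiAux.neg_negA]
          · rw [h4 i hik hij, PhiAux.psi_aG_ik hlt i hik hij]
        · by_cases hik : i = k
          · subst hik
            rw [h8 j hjk hjk', map_sub, map_mul,
              PhiAux.psi_aG_k'j hlt j hjk hjk', PhiAux.psi_aG_k'k hlt,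
              PhiAux.psi_aG_kj hlt j hjk hjk', PhiAux.neg_mulA]
            abel
          · by_cases hik' : i = k'
            · subst hik'
              rw [h5 j hjk hjk', PhiAux.psi_aG_kj hlt j hjk hjk']
            · rw [h1 i j hik hik' hjk hjk',
                PhiAux.psi_aG_out hlt i j hij hik hik' hjk hjk']
    · intro i
      simp only [RingHom.coe_comp, Function.comp_apply, RingHom.id_apply]
      by_cases hik : i = k
      · subst hik
        constructor
        · rw [hm1, PhiAux.psi_mtA, Equiv.swap_apply_right]
        · rw [hm2, PhiAux.psi_mtA, Equiv.swap_apply_right]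
      · by_cases hik' : i = k'
        · subst hik'
          constructor
          · rw [hm3, PhiAux.psi_mtA, Equiv.swap_apply_left]
          · rw [hm4, PhiAux.psi_mtA, Equiv.swap_apply_left]
        · constructor
          · rw [(hm5 i hik hik').1, PhiAux.psi_mtA, Equiv.swap_apply_of_ne_of_ne hik hik']
          · rw [(hm5 i hik hik').2, PhiAux.psi_mtA, Equiv.swap_apply_of_ne_of_ne hik hik']
  have hφpsi : φ.comp (PhiAux.psi k k') = RingHom.id (Atil n) := by
    apply PhiAux.ringHom_ext_on_gens
    · intro i j hij
      simp only [RingHom.coe_comp, Function.comp_apply, RingHom.id_apply]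
      by_cases hjk : j = k
      · subst hjk
        by_cases hik' : i = k'
        · subst hik'
          rw [PhiAux.psi_aG_k'k hlt, map_neg, h2, PhiAux.neg_negA]
        · rw [PhiAux.psi_aG_ik hlt i hij hik', h4 i hij hik']
      · by_cases hjk' : j = k'
        · subst hjk'
          by_cases hik : i = k
          · subst hik
            rw [PhiAux.psi_aG_kk' hlt, map_neg, map_mul, map_mul, hm1, hm4, h3,
              PhiAux.mul_negA, PhiAux.mtA_cancel, PhiAux.neg_negA]
          · rcases tri i hik hij with hl | hg
            · rw [PhiAux.psi_aG_ik'_lt hlt i hl, map_sub, map_mul, map_mul, map_mul,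
                hm1, hm4, h6 i hl, h4 i hik hij, h3, PhiAux.mul_negA, PhiAux.central_move,
                PhiAux.mul_negA, PhiAux.mtA_cancel]
              abel
            · rw [PhiAux.psi_aG_ik'_gt hlt i hg, map_sub, map_mul,
                h7 i hg, h4 i hik hij, h3, PhiAux.mul_negA, PhiAux.central_move]
              abel
        · by_cases hik : i = k
          · subst hik
            rw [PhiAux.psi_aG_kj hlt j hjk hjk', h5 j hjk hjk']
          · by_cases hik' : i = k'
            · subst hik'
              rw [PhiAux.psi_aG_k'j hlt j hjk hjk', map_sub, map_mul,
                h8 j hjk hjk', h2, h5 j hjk hjk', PhiAux.neg_mulA]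
              abel
            · rw [PhiAux.psi_aG_out hlt i j hij hik hik' hjk hjk',
                h1 i j hik hik' hjk hjk']
    · intro i
      simp only [RingHom.coe_comp, Function.comp_apply, RingHom.id_apply]
      by_cases hik : i = k
      · subst hik
        constructor
        · rw [PhiAux.psi_mtA, Equiv.swap_apply_left, hm3]
        · rw [PhiAux.psi_mtA, Equiv.swap_apply_left, hm4]
      · by_cases hik' : i = k'
        · subst hik'
          constructor
          · rw [PhiAux.psi_mtA, Equiv.swap_apply_right, hm1]
          · rw [PhiAux.psi_mtA, Equiv.swap_apply_right, hm2]
        · constructor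
          · rw [PhiAux.psi_mtA, Equiv.swap_apply_of_ne_of_ne hik hik', (hm5 i hik hik').1]
          · rw [PhiAux.psi_mtA, Equiv.swap_apply_of_ne_of_ne hik hik', (hm5 i hik hik').2]
  constructor
  · intro x y hxy
    have hx := DFunLike.congr_fun hpsiφ x
    have hy := DFunLike.congr_fun hpsiφ y
    simp only [RingHom.coe_comp, Function.comp_apply, RingHom.id_apply] at hx hy
    rw [← hx, ← hy, hxy]
  · intro y
    refine ⟨PhiAux.psi k k' y, ?_⟩
    have h := DFunLike.congr_fun hφpsi y
    simpa only [RingHom.coe_comp, Function.comp_apply, RingHom.id_apply] using h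
end
end

section
/- Fix δ > 0 and d ≥ 0. Let K(s), s ∈ B^d(1) (the closed d-dimensional unit ball), be a continuous family (in the C¹ topology) of C¹ embeddings of a fixed closed 1-manifold into R³, each transverse to ξ₀, such that K(s) has image contained in B(δ) for all s ∈ ∂B^d(1). Then there is a continuous homotopy K(s,t), 0 ≤ t ≤ 1, through embeddings transverse to ξ₀, with K(s,0) = K(s) for all s, K(s,t) = K(s) for all s ∈ ∂B^d(1) and all t, and K(s,1) contained in B(δ) for every s ∈ B^d(1). -/
/-!
STATEMENT 12: Fix δ > 0 and d ≥ 0.  Let K(s), s ∈ B^d(1), be a continuous family (in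
the C¹ topology) of C¹ embeddings of a fixed closed 1-manifold into ℝ³, each
transverse to ξ₀, with K(s) ⊂ B(δ) for s ∈ ∂B^d(1).  Then there is a continuous
homotopy K(s,t), 0 ≤ t ≤ 1, through embeddings transverse to ξ₀, with K(s,0) = K(s),
K(s,t) = K(s) for s ∈ ∂B^d(1), and K(s,1) ⊂ B(δ) for all s.

Model: the closed 1-manifold is a disjoint union of m circles, parametrized as
1-periodic maps ℝ → ℝ³ indexed by `Fin m`; "continuous family in the C¹ topology"
is encoded as joint continuity of the map and of its t-derivative; "embedding" as
injectivity up to deck transformations; B(δ) is the Euclidean ball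
x₁² + x₂² + x₃² ≤ δ²; transversality to ξ₀ is `alph (K ...) (K' ...) ≠ 0` with
α₀ = dx₃ − x₂dx₁ + x₁dx₂.
-/

noncomputable section

def alph (x v : Fin 3 → ℝ) : ℝ := v 2 - x 1 * v 0 + x 0 * v 1

abbrev Bd (d : ℕ) := Metric.closedBall (0 : EuclideanSpace ℝ (Fin d)) 1

def inBall (δ : ℝ) (x : Fin 3 → ℝ) : Prop := (x 0)^2 + (x 1)^2 + (x 2)^2 ≤ δ^2

/-- anisotropic scaling -/
def Fc (c : ℝ) (x : Fin 3 → ℝ) : Fin 3 → ℝ :=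
  ![Real.sqrt c * x 0, Real.sqrt c * x 1, c * x 2]

lemma Fc_zero (c : ℝ) (x : Fin 3 → ℝ) : Fc c x 0 = Real.sqrt c * x 0 := rfl
lemma Fc_one' (c : ℝ) (x : Fin 3 → ℝ) : Fc c x 1 = Real.sqrt c * x 1 := rfl
lemma Fc_two (c : ℝ) (x : Fin 3 → ℝ) : Fc c x 2 = c * x 2 := rfl

lemma alph_Fc (c : ℝ) (hc : 0 ≤ c) (x v : Fin 3 → ℝ) :
    alph (Fc c x) (Fc c v) = c * alph x v := by
  simp only [alph, Fc]
  have : Real.sqrt c * Real.sqrt c = c := Real.mul_self_sqrt hc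
  simp only [Matrix.cons_val_zero, Matrix.cons_val_one, Matrix.head_cons,
    Matrix.cons_val_two, Matrix.tail_cons]
  linear_combination (x 0 * v 1 - x 1 * v 0) * this

lemma Fc_inj (c : ℝ) (hc : 0 < c) (x y : Fin 3 → ℝ) (h : Fc c x = Fc c y) : x = y := by
  have hs : (0:ℝ) < Real.sqrt c := Real.sqrt_pos.mpr hc
  funext i
  fin_cases i
  · have := congrFun h 0
    simp only [Fc, Matrix.cons_val_zero] at this
    exact mul_left_cancel₀ hs.ne' this
  · have := congrFun h 1
    simp only [Fc, Matrix.cons_val_one, Matrix.head_cons] at this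
    exact mul_left_cancel₀ hs.ne' this
  · have := congrFun h 2
    simp only [Fc, Matrix.cons_val_two, Matrix.tail_cons, Matrix.head_cons] at this
    exact mul_left_cancel₀ hc.ne' this

lemma Fc_one (x : Fin 3 → ℝ) : Fc 1 x = x := by
  funext i
  fin_cases i <;> simp [Fc]


theorem shrinking_families_of_transverse_links
    (δ : ℝ) (hδ : 0 < δ) (d m : ℕ)
    (K K' : Bd d → Fin m → ℝ → (Fin 3 → ℝ))
    (hK : Continuous fun p : Bd d × Fin m × ℝ => K p.1 p.2.1 p.2.2)
    (hK' : Continuous fun p : Bd d × Fin m × ℝ => K' p.1 p.2.1 p.2.2)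
    (hder : ∀ s j t, HasDerivAt (fun τ => K s j τ) (K' s j t) t)
    (hper : ∀ s j t, K s j (t + 1) = K s j t)
    (hemb : ∀ s j t j' t', K s j t = K s j' t' → j = j' ∧ ∃ z : ℤ, t' = t + z)
    (htr : ∀ s j t, alph (K s j t) (K' s j t) ≠ 0)
    (hbd : ∀ s : Bd d, (s : EuclideanSpace ℝ (Fin d)) ∈ Metric.sphere 0 1 →
      ∀ j t, inBall δ (K s j t)) :
    ∃ Kh K'h : Bd d → Set.Icc (0:ℝ) 1 → Fin m → ℝ → (Fin 3 → ℝ),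
      Continuous (fun p : (Bd d × Set.Icc (0:ℝ) 1) × Fin m × ℝ =>
        Kh p.1.1 p.1.2 p.2.1 p.2.2) ∧
      Continuous (fun p : (Bd d × Set.Icc (0:ℝ) 1) × Fin m × ℝ =>
        K'h p.1.1 p.1.2 p.2.1 p.2.2) ∧
      (∀ s τ j t, HasDerivAt (fun u => Kh s τ j u) (K'h s τ j t) t) ∧
      (∀ s τ j t, Kh s τ j (t + 1) = Kh s τ j t) ∧
      (∀ s τ j t j' t', Kh s τ j t = Kh s τ j' t' → j = j' ∧ ∃ z : ℤ, t' = t + z) ∧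
      (∀ s τ j t, alph (Kh s τ j t) (K'h s τ j t) ≠ 0) ∧
      -- K(s, 0) = K(s):
      (∀ s j t, Kh s ⟨0, by norm_num⟩ j t = K s j t) ∧
      -- K(s, t) = K(s) for s ∈ ∂B^d(1):
      (∀ s : Bd d, (s : EuclideanSpace ℝ (Fin d)) ∈ Metric.sphere 0 1 →
        ∀ τ j t, Kh s τ j t = K s j t) ∧
      -- K(s, 1) ⊂ B(δ):
      (∀ s j t, inBall δ (Kh s ⟨1, by norm_num⟩ j t)) := by
  classical
  -- compactness of the domain
  haveI : CompactSpace (Bd d) :=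
    isCompact_iff_compactSpace.mp (isCompact_closedBall _ _)
  -- a uniform bound on the squared norms
  obtain ⟨M₀, hM₀⟩ : ∃ M₀, ∀ (s : Bd d) (j : Fin m) (t : Set.Icc (0:ℝ) 1),
      (K s j t 0)^2 + (K s j t 1)^2 + (K s j t 2)^2 ≤ M₀ := by
    have hf : Continuous (fun p : Bd d × Fin m × Set.Icc (0:ℝ) 1 =>
        (K p.1 p.2.1 p.2.2 0)^2 + (K p.1 p.2.1 p.2.2 1)^2 + (K p.1 p.2.1 p.2.2 2)^2) := by
      have hc : Continuous (fun p : Bd d × Fin m × Set.Icc (0:ℝ) 1 =>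
          K p.1 p.2.1 p.2.2) := by
        have : Continuous (fun p : Bd d × Fin m × Set.Icc (0:ℝ) 1 =>
            ((p.1, (p.2.1, (p.2.2 : ℝ))) : Bd d × Fin m × ℝ)) := by fun_prop
        exact hK.comp this
      fun_prop
    obtain ⟨M₀, hM₀⟩ := (isCompact_range hf).bddAbove
    exact ⟨M₀, fun s j t => hM₀ ⟨(s, j, t), rfl⟩⟩
  set M : ℝ := max M₀ (δ^2) with hMdef
  have hMpos : 0 < M := lt_of_lt_of_le (by positivity) (le_max_right _ _)
  -- the bound holds for all real t, by periodicity
  have hbound : ∀ (s : Bd d) (j : Fin m) (t : ℝ),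
      (K s j t 0)^2 + (K s j t 1)^2 + (K s j t 2)^2 ≤ M := by
    intro s j t
    have hp : Function.Periodic (K s j) 1 := fun x => hper s j x
    have h2 := hp.sub_int_mul_eq (x := t) ⌊t⌋
    have h3 : t - (⌊t⌋:ℝ)*1 = Int.fract t := by
      rw [mul_one, Int.self_sub_floor]
    rw [h3] at h2
    rw [← h2]
    refine le_trans (hM₀ s j ⟨Int.fract t, ⟨Int.fract_nonneg t, le_of_lt (Int.fract_lt_one t)⟩⟩)
      (le_max_left _ _)
  set c1 : ℝ := δ^2 / M with hc1def
  have hc1pos : 0 < c1 := div_pos (by positivity) hMpos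
  have hc1le : c1 ≤ 1 := by
    rw [hc1def, div_le_one hMpos]; exact le_max_right _ _
  -- the scaling parameter
  set cc : Bd d → Set.Icc (0:ℝ) 1 → ℝ :=
    fun s τ => 1 - (τ:ℝ) * (1 - c1) * min 1 (2*(1-‖(s:EuclideanSpace ℝ (Fin d))‖)) with hccdef
  have hnorm_le : ∀ s : Bd d, ‖(s : EuclideanSpace ℝ (Fin d))‖ ≤ 1 := by
    intro s
    simpa using mem_closedBall_zero_iff.mp s.2
  have hcc_le1 : ∀ s τ, cc s τ ≤ 1 := by
    intro s τ
    have h1 : (0:ℝ) ≤ (τ:ℝ) := τ.2.1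
    have h2 : (0:ℝ) ≤ 1 - c1 := by linarith
    have h3 : (0:ℝ) ≤ min 1 (2*(1-‖(s:EuclideanSpace ℝ (Fin d))‖)) :=
      le_min (by norm_num) (by have := hnorm_le s; linarith)
    simp only [hccdef]
    nlinarith [mul_nonneg (mul_nonneg h1 h2) h3]
  have hcc_ge : ∀ s τ, c1 ≤ cc s τ := by
    intro s τ
    have h1 : (τ:ℝ) ≤ 1 := τ.2.2
    have h1' : (0:ℝ) ≤ (τ:ℝ) := τ.2.1
    have h2 : (0:ℝ) ≤ 1 - c1 := by linarith
    have h3 : min 1 (2*(1-‖(s:EuclideanSpace ℝ (Fin d))‖)) ≤ 1 := min_le_left _ _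
    have h3' : (0:ℝ) ≤ min 1 (2*(1-‖(s:EuclideanSpace ℝ (Fin d))‖)) :=
      le_min (by norm_num) (by have := hnorm_le s; linarith)
    have e0 : 0 ≤ (τ:ℝ) * (1 - c1) := mul_nonneg h1' h2
    have e1 : (τ:ℝ) * (1 - c1) * min 1 (2*(1-‖(s:EuclideanSpace ℝ (Fin d))‖)) ≤ (τ:ℝ) * (1 - c1) :=
      mul_le_of_le_one_right e0 h3
    have e2 : (τ:ℝ) * (1 - c1) ≤ 1 - c1 := by nlinarith
    simp only [hccdef]; linarith
  have hcc_pos : ∀ s τ, 0 < cc s τ := fun s τ => lt_of_lt_of_le hc1pos (hcc_ge s τ)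
  -- the radial stretching
  set gco : Bd d → Set.Icc (0:ℝ) 1 → ℝ :=
    fun s τ => (max 1 ((1+(τ:ℝ))*‖(s:EuclideanSpace ℝ (Fin d))‖))⁻¹ * (1+(τ:ℝ)) with hgcodef
  have hmaxpos : ∀ s : Bd d, ∀ τ : Set.Icc (0:ℝ) 1,
      (0:ℝ) < max 1 ((1+(τ:ℝ))*‖(s:EuclideanSpace ℝ (Fin d))‖) :=
    fun s τ => lt_of_lt_of_le one_pos (le_max_left _ _)
  have hgco_nonneg : ∀ s τ, 0 ≤ gco s τ := by
    intro s τ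
    have h1' : (0:ℝ) ≤ (τ:ℝ) := τ.2.1
    have := hmaxpos s τ
    have : (0:ℝ) ≤ (max 1 ((1+(τ:ℝ))*‖(s:EuclideanSpace ℝ (Fin d))‖))⁻¹ := by positivity
    simp only [hgcodef]
    nlinarith
  have hg_mem : ∀ (s : Bd d) (τ : Set.Icc (0:ℝ) 1),
      gco s τ • (s : EuclideanSpace ℝ (Fin d)) ∈ Metric.closedBall (0 : EuclideanSpace ℝ (Fin d)) 1 := by
    intro s τ
    rw [Metric.mem_closedBall, dist_zero_right, norm_smul, Real.norm_eq_abs,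
      abs_of_nonneg (hgco_nonneg s τ)]
    have hmax := hmaxpos s τ
    rw [hgcodef]
    rw [mul_assoc, inv_mul_le_one₀ hmax]
    exact le_max_right _ _
  set g : Bd d → Set.Icc (0:ℝ) 1 → Bd d :=
    fun s τ => ⟨gco s τ • (s : EuclideanSpace ℝ (Fin d)), hg_mem s τ⟩ with hgdef
  -- key computations, stated for a general τ with a hypothesis on its value
  have hcc_at0 : ∀ (s : Bd d) (τ : Set.Icc (0:ℝ) 1), (τ:ℝ) = 0 → cc s τ = 1 := by
    intro s τ hτ
    simp only [hccdef, hτ]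
    ring
  have hg_at0 : ∀ (s : Bd d) (τ : Set.Icc (0:ℝ) 1), (τ:ℝ) = 0 → g s τ = s := by
    intro s τ hτ
    apply Subtype.ext
    have hgc : gco s τ = 1 := by
      simp only [hgcodef, hτ]
      rw [add_zero, one_mul, max_eq_left (hnorm_le s)]
      norm_num
    simp only [hgdef, hgc, one_smul]
  have hcc_sph : ∀ (s : Bd d), ‖(s:EuclideanSpace ℝ (Fin d))‖ = 1 →
      ∀ τ, cc s τ = 1 := by
    intro s hns τ
    simp only [hccdef, hns]
    rw [show (2:ℝ)*(1-1) = 0 by norm_num, min_eq_right (by norm_num : (0:ℝ) ≤ 1)]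
    ring
  have hg_sph : ∀ (s : Bd d), ‖(s:EuclideanSpace ℝ (Fin d))‖ = 1 →
      ∀ τ, g s τ = s := by
    intro s hns τ
    apply Subtype.ext
    have hgc : gco s τ = 1 := by
      simp only [hgcodef, hns, mul_one]
      rw [max_eq_right (by linarith [τ.2.1] : (1:ℝ) ≤ 1 + (τ:ℝ))]
      exact inv_mul_cancel₀ (by linarith [τ.2.1] : (1:ℝ)+(τ:ℝ) ≠ 0)
    simp only [hgdef, hgc, one_smul]
  have main1 : ∀ (τ : Set.Icc (0:ℝ) 1), (τ:ℝ) = 1 → ∀ (s : Bd d) (j : Fin m) (t : ℝ),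
      inBall δ (Fc (cc s τ) (K (g s τ) j t)) := by
    intro τ hτ s j t
    set u : ℝ := ‖(s:EuclideanSpace ℝ (Fin d))‖ with hu
    have hu0 : 0 ≤ u := norm_nonneg _
    have hu1 : u ≤ 1 := hnorm_le s
    set c := cc s τ with hc
    set x := K (g s τ) j t with hx
    have hcle : c ≤ 1 := hcc_le1 s τ
    have hcpos : 0 < c := hcc_pos s τ
    have hsum : (x 0)^2 + (x 1)^2 + (x 2)^2 ≤ M := hbound (g s τ) j t
    have key : c * ((x 0)^2 + (x 1)^2 + (x 2)^2) ≤ δ^2 := by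
      rcases le_total u (1/2) with hcase | hcase
      · -- inner region: c = c1
        have hmin : min 1 (2*(1-u)) = 1 := min_eq_left (by linarith)
        have hceq : c = c1 := by
          rw [hc]
          simp only [hccdef, hτ]
          rw [← hu, hmin]
          ring
        rw [hceq]
        calc c1 * ((x 0)^2 + (x 1)^2 + (x 2)^2) ≤ c1 * M := by
              exact mul_le_mul_of_nonneg_left hsum hc1pos.le
          _ = δ^2 := by rw [hc1def]; field_simp
      · -- outer region: g s τ lies on the sphere
        have hgs : (g s τ : EuclideanSpace ℝ (Fin d)) ∈
            Metric.sphere (0:EuclideanSpace ℝ (Fin d)) 1 := by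
          have hmax : max 1 ((1+(1:ℝ))*u) = 2*u := by
            rw [max_eq_right (by linarith)]; ring
          have hgco : gco s τ = (2*u)⁻¹ * 2 := by
            simp only [hgcodef, hτ]
            rw [← hu, hmax]
            norm_num
          have hupos : 0 < u := by linarith
          simp only [hgdef, Metric.mem_sphere, dist_zero_right, norm_smul,
            Real.norm_eq_abs, hgco]
          rw [abs_of_nonneg (by positivity : (0:ℝ) ≤ (2*u)⁻¹ * 2), ← hu]
          field_simp
        have hb := hbd (g s τ) hgs j t
        rw [inBall] at hb
        rw [← hx] at hb
        nlinarith
    show (Fc c x 0)^2 + (Fc c x 1)^2 + (Fc c x 2)^2 ≤ δ^2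
    rw [Fc_zero, Fc_one', Fc_two]
    have hsq : Real.sqrt c ^ 2 = c := Real.sq_sqrt hcpos.le
    have h2 : (c * x 2)^2 ≤ c * (x 2)^2 := by nlinarith
    nlinarith [sq_nonneg (x 0), sq_nonneg (x 1), sq_nonneg (x 2), hsq]
  -- continuity
  have hsnorm : Continuous (fun q : Bd d × Set.Icc (0:ℝ) 1 =>
      ‖(q.1 : EuclideanSpace ℝ (Fin d))‖) :=
    (continuous_subtype_val.comp continuous_fst).norm
  have htau : Continuous (fun q : Bd d × Set.Icc (0:ℝ) 1 => ((q.2 : ℝ))) :=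
    continuous_subtype_val.comp continuous_snd
  have hccC : Continuous (fun q : Bd d × Set.Icc (0:ℝ) 1 => cc q.1 q.2) := by
    simp only [hccdef]
    exact continuous_const.sub ((htau.mul continuous_const).mul
      (continuous_const.min (continuous_const.mul (continuous_const.sub hsnorm))))
  have hmaxC : Continuous (fun q : Bd d × Set.Icc (0:ℝ) 1 =>
      max 1 ((1+(q.2:ℝ))*‖(q.1:EuclideanSpace ℝ (Fin d))‖)) :=
    continuous_const.max ((continuous_const.add htau).mul hsnorm)
  have hgcoC : Continuous (fun q : Bd d × Set.Icc (0:ℝ) 1 => gco q.1 q.2) := by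
    simp only [hgcodef]
    exact (hmaxC.inv₀ (fun q => (hmaxpos q.1 q.2).ne')).mul (continuous_const.add htau)
  have hgC : Continuous (fun q : Bd d × Set.Icc (0:ℝ) 1 => g q.1 q.2) := by
    simp only [hgdef]
    exact Continuous.subtype_mk
      (hgcoC.smul (continuous_subtype_val.comp continuous_fst)) _
  have hcont : ∀ (L : Bd d → Fin m → ℝ → (Fin 3 → ℝ)),
      (Continuous fun p : Bd d × Fin m × ℝ => L p.1 p.2.1 p.2.2) →
      Continuous (fun p : (Bd d × Set.Icc (0:ℝ) 1) × Fin m × ℝ =>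
        Fc (cc p.1.1 p.1.2) (L (g p.1.1 p.1.2) p.2.1 p.2.2)) := by
    intro L hL
    have hφ : Continuous (fun p : (Bd d × Set.Icc (0:ℝ) 1) × Fin m × ℝ =>
        ((g p.1.1 p.1.2, p.2.1, p.2.2) : Bd d × Fin m × ℝ)) :=
      (hgC.comp continuous_fst).prodMk
        ((continuous_fst.comp continuous_snd).prodMk
          (continuous_snd.comp continuous_snd))
    have hLC : Continuous (fun p : (Bd d × Set.Icc (0:ℝ) 1) × Fin m × ℝ =>
        L (g p.1.1 p.1.2) p.2.1 p.2.2) := hL.comp hφ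
    have hcP : Continuous (fun p : (Bd d × Set.Icc (0:ℝ) 1) × Fin m × ℝ =>
        cc p.1.1 p.1.2) := hccC.comp continuous_fst
    apply continuous_pi
    intro i
    fin_cases i
    · show Continuous (fun p : (Bd d × Set.Icc (0:ℝ) 1) × Fin m × ℝ =>
        Real.sqrt (cc p.1.1 p.1.2) * (L (g p.1.1 p.1.2) p.2.1 p.2.2 0))
      exact (Real.continuous_sqrt.comp hcP).mul ((continuous_apply (0:Fin 3)).comp hLC)
    · show Continuous (fun p : (Bd d × Set.Icc (0:ℝ) 1) × Fin m × ℝ =>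
        Real.sqrt (cc p.1.1 p.1.2) * (L (g p.1.1 p.1.2) p.2.1 p.2.2 1))
      exact (Real.continuous_sqrt.comp hcP).mul ((continuous_apply (1:Fin 3)).comp hLC)
    · show Continuous (fun p : (Bd d × Set.Icc (0:ℝ) 1) × Fin m × ℝ =>
        (cc p.1.1 p.1.2) * (L (g p.1.1 p.1.2) p.2.1 p.2.2 2))
      exact hcP.mul ((continuous_apply (2:Fin 3)).comp hLC)
  -- the homotopy
  refine ⟨fun s τ j t => Fc (cc s τ) (K (g s τ) j t),
         fun s τ j t => Fc (cc s τ) (K' (g s τ) j t), ?_, ?_, ?_, ?_, ?_, ?_, ?_, ?_, ?_⟩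
  · exact hcont K hK
  · exact hcont K' hK'
  · -- derivative
    intro s τ j t
    rw [hasDerivAt_pi]
    intro i
    have hcomp := hasDerivAt_pi.mp (hder (g s τ) j t)
    fin_cases i
    · simpa [Fc] using (hcomp 0).const_mul (Real.sqrt (cc s τ))
    · simpa [Fc] using (hcomp 1).const_mul (Real.sqrt (cc s τ))
    · simpa [Fc] using (hcomp 2).const_mul (cc s τ)
  · -- periodicity
    intro s τ j t
    show Fc (cc s τ) (K (g s τ) j (t + 1)) = Fc (cc s τ) (K (g s τ) j t)
    rw [hper]
  · -- embedding
    intro s τ j t j' t' h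
    exact hemb (g s τ) j t j' t' (Fc_inj _ (hcc_pos s τ) _ _ h)
  · -- transversality
    intro s τ j t
    show alph (Fc (cc s τ) (K (g s τ) j t)) (Fc (cc s τ) (K' (g s τ) j t)) ≠ 0
    rw [alph_Fc _ (hcc_pos s τ).le]
    exact mul_ne_zero (hcc_pos s τ).ne' (htr (g s τ) j t)
  · -- τ = 0
    intro s j t
    show Fc (cc s ⟨0, by norm_num⟩) (K (g s ⟨0, by norm_num⟩) j t) = K s j t
    rw [hcc_at0 s _ rfl, hg_at0 s _ rfl, Fc_one]
  · -- boundary sphere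
    intro s hs τ j t
    have hns : ‖(s:EuclideanSpace ℝ (Fin d))‖ = 1 := by
      simpa [dist_zero_right] using hs
    show Fc (cc s τ) (K (g s τ) j t) = K s j t
    rw [hcc_sph s hns τ, hg_sph s hns τ, Fc_one]
  · -- τ = 1 : image in B(δ)
    intro s j t
    exact main1 _ rfl s j t
end
end

section
/- Let (A, ∂̂̂) be the DGA over Z[λ^{±1}, μ^{±1}] freely generated by c (degree 1) and e (degree 2) with ∂̂̂c = λ + μ and ∂̂̂e = 0 (the (U,V) = (0,0) specialization of the transverse DGA of the trivial 1-braid). Then the degree-0 homology of (A, ∂̂̂) is isomorphic to Z[λ^{±1}, μ^{±1}]/(λ + μ), which is a nonzero ring; in particular the homology of (A, ∂̂̂) is nontrivial, so (A, ∂̂̂) is not stable tame isomorphic to the (U,V) = (0,0) specialization of the transverse DGA of σ₁^{-1} ∈ B₂ (whose homology vanishes). Hence the filtered transverse DGAs of the trivial 1-braid and of σ₁^{-1} are not filtered stable tame isomorphic, distinguishing the transverse unknots of self-linking numbers −1 and −3. -/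
noncomputable section
open scoped BigOperators Classical

/- ## coefficient ring Z[λ_1^{±1},μ_1^{±1},…,λ_r^{±1},μ_r^{±1},U,V] -/
abbrev Rr (r : ℕ) : Type := AddMonoidAlgebra ℤ ((Fin r → ℤ) × (Fin r → ℤ) × ℕ × ℕ)
def lamC {r : ℕ} (m : Fin r) (z : ℤ) : Rr r := AddMonoidAlgebra.single (Pi.single m z, 0, 0, 0) 1
def muC {r : ℕ} (m : Fin r) (z : ℤ) : Rr r := AddMonoidAlgebra.single (0, Pi.single m z, 0, 0) 1
def Uc {r : ℕ} : Rr r := AddMonoidAlgebra.single (0, 0, 1, 0) 1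
def Vc {r : ℕ} : Rr r := AddMonoidAlgebra.single (0, 0, 0, 1) 1
def lmwC {r : ℕ} (m : Fin r) (wz : ℤ) : Rr r := AddMonoidAlgebra.single (Pi.single m 1, Pi.single m wz, 0, 0) 1
def lmwInvC {r : ℕ} (m : Fin r) (wz : ℤ) : Rr r := AddMonoidAlgebra.single (Pi.single m (-1), Pi.single m (-wz), 0, 0) 1

/- ## generators -/
abbrev OffD' (n : ℕ) := {p : Fin n × Fin n // p.1 ≠ p.2}
inductive GenIdx (n : ℕ) : Type
  | a (p : OffD' n)
  | b (p : OffD' n)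
  | c (i j : Fin n)
  | e (i j : Fin n)

def gdeg {n : ℕ} : GenIdx n → ℕ
  | .a _ => 0
  | .b _ => 1
  | .c _ _ => 1
  | .e _ _ => 2

abbrev FA (n r : ℕ) := FreeAlgebra (Rr r) (GenIdx n)

def cm {n r : ℕ} (x : Rr r) : FA n r := algebraMap _ _ x
def Xa {n r : ℕ} (i j : Fin n) : FA n r := if h : i = j then 0 else FreeAlgebra.ι _ (GenIdx.a ⟨(i,j), h⟩)
def Xb {n r : ℕ} (i j : Fin n) : FA n r := if h : i = j then 0 else FreeAlgebra.ι _ (GenIdx.b ⟨(i,j), h⟩)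
def Xc {n r : ℕ} (i j : Fin n) : FA n r := FreeAlgebra.ι _ (GenIdx.c i j)
def Xe {n r : ℕ} (i j : Fin n) : FA n r := FreeAlgebra.ι _ (GenIdx.e i j)

/- ## braid words, permutations, writhe -/
abbrev SIdx (n : ℕ) := {k : Fin n // (k : ℕ) + 1 < n}
abbrev Brd (n : ℕ) := List (SIdx n × Bool)
def sSucc {n : ℕ} (k : SIdx n) : Fin n := ⟨(k.1 : ℕ) + 1, k.2⟩
def permOf {n : ℕ} : Brd n → Equiv.Perm (Fin n)
  | [] => 1
  | (k, _) :: t => Equiv.swap k.1 (sSucc k) * permOf t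
def wriAux {n r : ℕ} (α : Fin n → Fin r) (m : Fin r) : Brd n → Equiv.Perm (Fin n) → ℤ
  | [], _ => 0
  | (k, ε) :: t, ρ =>
      (if α (ρ k.1) = m ∧ α (ρ (sSucc k)) = m then (if ε then 1 else -1) else 0) +
        wriAux α m t (Equiv.swap k.1 (sSucc k) * ρ)
def wri {n r : ℕ} (α : Fin n → Fin r) (m : Fin r) (w : Brd n) : ℤ := wriAux α m w 1

/- ## the matrices -/
def Amat {n r : ℕ} (α : Fin n → Fin r) : Matrix (Fin n) (Fin n) (FA n r) := fun i j =>
  if i = j then cm (1 + muC (α i) 1)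
  else if i < j then Xa i j
  else cm (muC (α j) 1) * Xa i j
def AUmat {n r : ℕ} (α : Fin n → Fin r) : Matrix (Fin n) (Fin n) (FA n r) := fun i j =>
  if i = j then cm (Uc + muC (α i) 1)
  else if i < j then cm Uc * Xa i j
  else cm (muC (α j) 1) * Xa i j
def AVmat {n r : ℕ} (α : Fin n → Fin r) : Matrix (Fin n) (Fin n) (FA n r) := fun i j =>
  if i = j then cm (1 + muC (α i) 1 * Vc)
  else if i < j then Xa i j
  else cm (muC (α j) 1 * Vc) * Xa i j
def Bmat {n r : ℕ} (α : Fin n → Fin r) : Matrix (Fin n) (Fin n) (FA n r) := fun i j =>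
  if i = j then 0
  else if i < j then Xb i j
  else cm (muC (α j) 1) * Xb i j
def BUmat {n r : ℕ} (α : Fin n → Fin r) : Matrix (Fin n) (Fin n) (FA n r) := fun i j =>
  if i = j then 0
  else if i < j then cm Uc * Xb i j
  else cm (muC (α j) 1) * Xb i j
def BVmat {n r : ℕ} (α : Fin n → Fin r) : Matrix (Fin n) (Fin n) (FA n r) := fun i j =>
  if i = j then 0
  else if i < j then Xb i j
  else cm (muC (α j) 1 * Vc) * Xb i j
def Cmat {n r : ℕ} : Matrix (Fin n) (Fin n) (FA n r) := fun i j => Xc i j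
def Emat {n r : ℕ} : Matrix (Fin n) (Fin n) (FA n r) := fun i j => Xe i j

/-- strand i is "leading": the first strand of its component. -/
def leading {n r : ℕ} (α : Fin n → Fin r) (i : Fin n) : Prop := ∀ j : Fin n, α j = α i → i ≤ j

def lamMat {n r : ℕ} (w : Brd n) (α : Fin n → Fin r) : Matrix (Fin n) (Fin n) (FA n r) :=
  Matrix.diagonal fun i => if leading α i then cm (lmwC (α i) (wri α (α i) w)) else 1
def lamInvMat {n r : ℕ} (w : Brd n) (α : Fin n → Fin r) : Matrix (Fin n) (Fin n) (FA n r) :=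
  Matrix.diagonal fun i => if leading α i then cm (lmwInvC (α i) (wri α (α i) w)) else 1

/- ## grading and Leibniz rule on free algebras -/
def homog (R : Type) [CommRing R] {ι : Type} (dg : ι → ℕ) (d : ℕ) : Submodule R (FreeAlgebra R ι) :=
  Submodule.span R {x | ∃ l : List ι, (l.map dg).sum = d ∧ x = (l.map (FreeAlgebra.ι R)).prod}

def IsLeibniz {R : Type} [CommRing R] {ι : Type} (dg : ι → ℕ)
    (D : FreeAlgebra R ι →ₗ[R] FreeAlgebra R ι) : Prop :=
  ∀ (d : ℕ) (x y : FreeAlgebra R ι), x ∈ homog R dg d →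
    D (x * y) = D x * y + ((-1 : ℤ) ^ d) • (x * D y)
/- ## FDGA and stable tame isomorphism -/
structure FDGA (R : Type) [CommRing R] where
  ι : Type
  dg : ι → ℕ
  D : FreeAlgebra R ι →ₗ[R] FreeAlgebra R ι

/-- algebra morphism induced by a map of generators. -/
def relabelHom (R : Type) [CommRing R] {ι ι' : Type} (e : ι → ι') :
    FreeAlgebra R ι →ₐ[R] FreeAlgebra R ι' :=
  FreeAlgebra.lift R fun i => FreeAlgebra.ι R (e i)

/-- elementary automorphism: sends one generator g to u•g + v with u a unit and v in
the subalgebra generated by the remaining generators, fixing the other generators. -/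
def IsElementaryAut (R : Type) [CommRing R] {ι : Type}
    (ψ : FreeAlgebra R ι ≃ₐ[R] FreeAlgebra R ι) : Prop :=
  ∃ (g : ι) (u : Rˣ) (v : FreeAlgebra R ι),
    v ∈ Algebra.adjoin R ((fun h : ι => FreeAlgebra.ι R h) '' {h | h ≠ g}) ∧
    ψ (FreeAlgebra.ι R g) = (u : R) • FreeAlgebra.ι R g + v ∧
    ∀ h : ι, h ≠ g → ψ (FreeAlgebra.ι R h) = FreeAlgebra.ι R h

/-- relabeling isomorphism induced by a degree-preserving bijection of generators. -/
def IsRelabel {R : Type} [CommRing R] (G G' : FDGA R)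
    (Θ : FreeAlgebra R G.ι ≃ₐ[R] FreeAlgebra R G'.ι) : Prop :=
  ∃ e : G.ι ≃ G'.ι, (∀ i, G'.dg (e i) = G.dg i) ∧
    ∀ i, Θ (FreeAlgebra.ι R i) = FreeAlgebra.ι R (e i)

/-- a tame isomorphism: a composition of elementary automorphisms followed by a
generator-relabeling isomorphism. -/
def IsTameIso {R : Type} [CommRing R] (G G' : FDGA R)
    (Θ : FreeAlgebra R G.ι ≃ₐ[R] FreeAlgebra R G'.ι) : Prop :=
  ∃ (L : List (FreeAlgebra R G.ι ≃ₐ[R] FreeAlgebra R G.ι))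
    (Θ₀ : FreeAlgebra R G.ι ≃ₐ[R] FreeAlgebra R G'.ι),
    (∀ ψ ∈ L, IsElementaryAut R ψ) ∧ IsRelabel G G' Θ₀ ∧ Θ = L.prod.trans Θ₀

/-- a tame isomorphism of DGAs: a tame isomorphism commuting with the differentials. -/
def IsTameDGAIso {R : Type} [CommRing R] (G G' : FDGA R) : Prop :=
  ∃ Θ : FreeAlgebra R G.ι ≃ₐ[R] FreeAlgebra R G'.ι,
    IsTameIso G G' Θ ∧ ∀ x, Θ (G.D x) = G'.D (Θ x)

/-- `G'` is a stabilization of `G`: it has two extra free generators α (degree d+1) and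
β (degree d), with ∂α = β, ∂β = 0, the differential extending that of `G` by the
graded Leibniz rule. -/
def IsStabOf {R : Type} [CommRing R] (G' G : FDGA R) : Prop :=
  ∃ (d : ℕ) (e : G'.ι ≃ (G.ι ⊕ Bool)),
    (∀ i : G.ι, G'.dg (e.symm (Sum.inl i)) = G.dg i) ∧
    G'.dg (e.symm (Sum.inr true)) = d + 1 ∧
    G'.dg (e.symm (Sum.inr false)) = d ∧
    IsLeibniz G'.dg G'.D ∧
    (∀ i : G.ι,
      G'.D (FreeAlgebra.ι R (e.symm (Sum.inl i))) =
        relabelHom R (fun i : G.ι => e.symm (Sum.inl i)) (G.D (FreeAlgebra.ι R i))) ∧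
    G'.D (FreeAlgebra.ι R (e.symm (Sum.inr true))) = FreeAlgebra.ι R (e.symm (Sum.inr false)) ∧
    G'.D (FreeAlgebra.ι R (e.symm (Sum.inr false))) = 0

/-- two free DGAs are (filtered) stable tame isomorphic if after finitely many
stabilizations they become tamely isomorphic (over the fixed coefficient ring, so in
particular all filtrations by scalar coefficients are respected). -/
def IsStableTame {R : Type} [CommRing R] (G G' : FDGA R) : Prop :=
  ∃ G₁ G₂ : FDGA R,
    Relation.ReflTransGen (fun X Y : FDGA R => IsStabOf Y X) G G₁ ∧
    Relation.ReflTransGen (fun X Y : FDGA R => IsStabOf Y X) G' G₂ ∧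
    IsTameDGAIso G₁ G₂

def phiW {N : ℕ} (φs : SIdx N → RingAut (Atil N)) : Brd N → RingAut (Atil N)
  | [] => 1
  | (k, ε) :: t => (if ε then φs k else (φs k)⁻¹) * phiW φs t

def embS {n : ℕ} (k : SIdx n) : SIdx (n + 1) :=
  ⟨k.1.succ, by have := k.2; simp [Fin.val_succ]; omega⟩

def embW {n : ℕ} (w : Brd n) : Brd (n + 1) := w.map fun p => (embS p.1, p.2)

def sub0 (n : ℕ) : Subring (Atil (n + 1)) :=
  Subring.closure ({x | ∃ (i : Fin n) (z : ℤ), x = mtA i.succ z} ∪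
    {x | ∃ i j : Fin n, x = aG i.succ j.succ})

/-- All the data entering the combinatorial transverse DGA `(A_n(B), ∂⁻)` of a braid
word `B = w` on `n` strands whose closure is an `r`-component link, together with the
defining properties of each piece:

* `α` assigns to each strand its link component (two strands belong to the same
  component iff they are in the same cycle of the braid permutation);
* `φs` are the automorphisms `φ_{σ_k}` of `Ã⁰_{n+1}` (strands `0,1,…,n`);
* `P`, `Q` are the matrices `Φ^L_B`, `Φ^R_B`, with entries in the subalgebra `Ã⁰ₙ`,
  defined by the expansions of `φ′_B(a_{i0})` and `φ′_B(a_{0j})`;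
* `θ` is the substitution `μ̃ᵢ ↦ μ_{α(i)}`, `a_{ij} ↦ a_{ij}` from `Ã⁰_{n+1}` to
  `A_n(B)`, so `P.map θ` and `Q.map θ` are `Φ^L_B`, `Φ^R_B` over `A_n(B)`;
* `Qi` is the two-sided inverse `(Φ^R_B)^{-1}` over `A_n(B)`;
* `D` is the degree `−1` map `∂⁻` determined on the generators by the matrix equations
  `∂⁻𝐀 = 0`, `∂⁻𝐁 = −𝛌⁻¹𝐀𝛌 + Φ^L𝐀Φ^R`, `∂⁻𝐂 = 𝐀^V𝛌 + 𝐀^UΦ^R`,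
  `∂⁻𝐄 = 𝐁^V(Φ^R)⁻¹ + 𝐁^U𝛌⁻¹ − Φ^L𝐂𝛌⁻¹ + 𝛌⁻¹𝐂(Φ^R)⁻¹`, and extended to all of
  `A_n(B)` by the graded Leibniz rule. -/
structure TransData (n r : ℕ) (w : Brd n) where
  α : Fin n → Fin r
  hαsur : Function.Surjective α
  hα : ∀ i j : Fin n, α i = α j ↔ (permOf w).SameCycle i j
  φs : SIdx (n + 1) → RingAut (Atil (n + 1))
  hφs : ∀ k : SIdx (n + 1), IsPhiSigma (n + 1) k.1 k.2 (φs k : Atil (n+1) →+* Atil (n+1))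
  P : Matrix (Fin n) (Fin n) (Atil (n + 1))
  Q : Matrix (Fin n) (Fin n) (Atil (n + 1))
  hPQmem : ∀ i j : Fin n, P i j ∈ sub0 n ∧ Q i j ∈ sub0 n
  hP : ∀ i : Fin n, phiW φs (embW w) (aG i.succ 0) = ∑ j : Fin n, P i j * aG j.succ 0
  hQ : ∀ j : Fin n, phiW φs (embW w) (aG 0 j.succ) = ∑ i : Fin n, aG 0 i.succ * Q i j
  θ : Atil (n + 1) →+* FA n r
  hθμ : ∀ (i : Fin n) (z : ℤ), θ (mtA i.succ z) = cm (muC (α i) z)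
  hθa : ∀ i j : Fin n, θ (aG i.succ j.succ) = Xa i j
  Qi : Matrix (Fin n) (Fin n) (FA n r)
  hQi : Q.map θ * Qi = 1 ∧ Qi * Q.map θ = 1
  D : FA n r →ₗ[Rr r] FA n r
  hLeib : IsLeibniz gdeg D
  hDA : ∀ i j : Fin n, D (Amat α i j) = 0
  hDB : ∀ i j : Fin n,
    D (Bmat α i j) = (- (lamInvMat w α * Amat α * lamMat w α) + P.map θ * Amat α * Q.map θ) i j
  hDC : ∀ i j : Fin n,
    D (Cmat i j) = (AVmat α * lamMat w α + AUmat α * Q.map θ) i j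
  hDE : ∀ i j : Fin n,
    D (Emat i j) = ((BVmat α * Qi + BUmat α * lamInvMat w α
      - P.map θ * Cmat * lamInvMat w α + lamInvMat w α * Cmat * Qi :
        Matrix (Fin n) (Fin n) (FA n r)) i j)

/-- The transverse DGA of a braid word, as a free DGA over `Rr r`. -/
def TransData.toF {n r : ℕ} {w : Brd n} (data : TransData n r w) : FDGA (Rr r) :=
  ⟨GenIdx n, gdeg, data.D⟩

/- ## the (U,V) = (0,0) specializations: trivial 1-braid versus σ₁⁻¹ ∈ B₂ -/

/-- The coefficient ring `ℤ[λ^{±1}, μ^{±1}]`. -/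
abbrev RL : Type := AddMonoidAlgebra ℤ (ℤ × ℤ)

/-- The monomial `λ^a μ^b` in `ℤ[λ^{±1}, μ^{±1}]`. -/
def lm (a b : ℤ) : RL := AddMonoidAlgebra.single (a, b) 1

/-- Generators `c` (degree 1) and `e` (degree 2). -/
inductive CE : Type
  | c
  | e

def cedeg : CE → ℕ
  | .c => 1
  | .e => 2

/-- The braid word `σ₁⁻¹ ∈ B₂` (0-based index 0). -/
def wSigma1Inv : Brd 2 := [(⟨(0 : Fin 2), by omega⟩, false)]

/-- The braid word `σ₁ ∈ B₂`; the trivial 1-braid has no letters. -/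
def wTriv : Brd 1 := []

/-- Degree-zero cycles of a free DGA. -/
def Z0 {ι : Type} (dg : ι → ℕ) (D : FreeAlgebra RL ι →ₗ[RL] FreeAlgebra RL ι) :
    Submodule RL (FreeAlgebra RL ι) :=
  homog RL dg 0 ⊓ LinearMap.ker D

/-- Degree-zero boundaries, inside the degree-zero cycles. -/
def B0 {ι : Type} (dg : ι → ℕ) (D : FreeAlgebra RL ι →ₗ[RL] FreeAlgebra RL ι) :
    Submodule RL (Z0 dg D) :=
  Submodule.comap (Z0 dg D).subtype (LinearMap.range D)

/-- The degree-zero homology of a free DGA over `RL`. -/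
abbrev H0 {ι : Type} (dg : ι → ℕ) (D : FreeAlgebra RL ι →ₗ[RL] FreeAlgebra RL ι) :=
  @HasQuotient.Quotient (Z0 dg D) _ Submodule.hasQuotient (B0 dg D)

/-! ### Auxiliary lemmas -/

section Aux

/-- sign character on `RL`: `λ ↦ 1`, `μ ↦ -1`. -/
def sgnRL : RL →ₐ[ℤ] ℤ :=
  AddMonoidAlgebra.lift ℤ ℤ (ℤ × ℤ)
    { toFun := fun g => (((-1 : ℤˣ) ^ (Multiplicative.toAdd g).2 : ℤˣ) : ℤ)
      map_one' := by simp
      map_mul' := by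
        intro a b
        simp only [toAdd_mul, Prod.snd_add, zpow_add]
        push_cast
        ring }

lemma sgnRL_lm (a b : ℤ) : sgnRL (lm a b) = (((-1 : ℤˣ) ^ b : ℤˣ) : ℤ) := by
  unfold sgnRL lm
  rw [AddMonoidAlgebra.lift_single]
  simp

/-- sign character on `Rr 1`: `λ ↦ 1`, `μ ↦ -1`, `U ↦ 0`, `V ↦ 0`. -/
def sgnRr : Rr 1 →ₐ[ℤ] ℤ :=
  AddMonoidAlgebra.lift ℤ ℤ _
    { toFun := fun g =>
        (((-1 : ℤˣ) ^ ((Multiplicative.toAdd g).2.1 0) : ℤˣ) : ℤ) *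
          ((if (Multiplicative.toAdd g).2.2.1 = 0 then (1 : ℤ) else 0) *
            (if (Multiplicative.toAdd g).2.2.2 = 0 then (1 : ℤ) else 0))
      map_one' := by simp
      map_mul' := by
        intro a b
        simp only [toAdd_mul, Prod.snd_add, Prod.fst_add, Pi.add_apply, zpow_add,
          Nat.add_eq_zero]
        by_cases h1 : (Multiplicative.toAdd a).2.2.1 = 0 <;>
          by_cases h2 : (Multiplicative.toAdd b).2.2.1 = 0 <;>
            by_cases h3 : (Multiplicative.toAdd a).2.2.2 = 0 <;>
              by_cases h4 : (Multiplicative.toAdd b).2.2.2 = 0 <;>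
                simp [h1, h2, h3, h4] <;> push_cast <;> ring }

lemma sgnRr_single (l m : Fin 1 → ℤ) (u v : ℕ) :
    sgnRr (AddMonoidAlgebra.single (l, m, u, v) (1 : ℤ)) =
      (((-1 : ℤˣ) ^ (m 0) : ℤˣ) : ℤ) *
        ((if u = 0 then (1 : ℤ) else 0) * (if v = 0 then (1 : ℤ) else 0)) := by
  unfold sgnRr
  rw [AddMonoidAlgebra.lift_single]
  simp

lemma sgnRr_Uc : sgnRr (Uc (r := 1)) = 0 := by
  unfold Uc; rw [sgnRr_single]; norm_num

lemma sgnRr_Vc : sgnRr (Vc (r := 1)) = 0 := by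
  unfold Vc; rw [sgnRr_single]; norm_num

lemma sgnRr_lamC : sgnRr (lamC (0 : Fin 1) 1) = 1 := by
  unfold lamC; rw [sgnRr_single]; norm_num

lemma sgnRr_muC : sgnRr (muC (0 : Fin 1) 1) = -1 := by
  unfold muC; rw [sgnRr_single]; norm_num [Pi.single_eq_same]

lemma sgnRr_lmwC : sgnRr (lmwC (0 : Fin 1) (-1)) = -1 := by
  unfold lmwC; rw [sgnRr_single]; norm_num [Pi.single_eq_same]

/-- the ideal `(λ + μ) ⊂ RL`. -/
lemma span_le_ker_sgnRL :
    Ideal.span {lm 1 0 + lm 0 1} ≤ RingHom.ker (sgnRL.toRingHom) := by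
  rw [Ideal.span_le]
  rintro x rfl
  simp only [SetLike.mem_coe, RingHom.mem_ker, AlgHom.toRingHom_eq_coe,
    RingHom.coe_coe, map_add, sgnRL_lm]
  norm_num

lemma lm_not_mem : lm 1 (-1) ∉ Ideal.span {lm 1 0 + lm 0 1} := by
  intro h
  have h0 := span_le_ker_sgnRL h
  rw [RingHom.mem_ker] at h0
  simp only [AlgHom.toRingHom_eq_coe, RingHom.coe_coe, sgnRL_lm] at h0
  norm_num at h0

lemma one_not_mem : (1 : RL) ∉ Ideal.span {lm 1 0 + lm 0 1} := by
  intro h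
  have h0 := span_le_ker_sgnRL h
  rw [RingHom.mem_ker] at h0
  simp at h0

/-- the ideal `(U, V, λ + μ) ⊂ Rr 1`. -/
def Jid : Ideal (Rr 1) := Ideal.span {Uc, Vc, lamC 0 1 + muC 0 1}

lemma span_le_ker_sgnRr : Jid ≤ RingHom.ker (sgnRr.toRingHom) := by
  rw [Jid, Ideal.span_le]
  intro x hx
  simp only [Set.mem_insert_iff, Set.mem_singleton_iff] at hx
  rcases hx with rfl | rfl | rfl <;>
    simp [RingHom.mem_ker, sgnRr_Uc, sgnRr_Vc, sgnRr_lamC, sgnRr_muC]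

lemma lmwC_not_mem : lmwC (0 : Fin 1) (-1) ∉ Jid := by
  intro h
  have h0 := span_le_ker_sgnRr h
  rw [RingHom.mem_ker] at h0
  simp only [AlgHom.toRingHom_eq_coe, RingHom.coe_coe, sgnRr_lmwC] at h0
  norm_num at h0

/-! ### Leibniz-rule basics -/

lemma one_mem_homog {R : Type} [CommRing R] {ι : Type} (dg : ι → ℕ) :
    (1 : FreeAlgebra R ι) ∈ homog R dg 0 :=
  Submodule.subset_span ⟨[], by simp, by simp⟩

lemma ι_mem_homog {R : Type} [CommRing R] {ι : Type} (dg : ι → ℕ) (g : ι) :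
    FreeAlgebra.ι R g ∈ homog R dg (dg g) :=
  Submodule.subset_span ⟨[g], by simp, by simp⟩

lemma D_one_eq_zero {R : Type} [CommRing R] {ι : Type} {dg : ι → ℕ}
    {D : FreeAlgebra R ι →ₗ[R] FreeAlgebra R ι} (hL : IsLeibniz dg D) :
    D (1 : FreeAlgebra R ι) = 0 := by
  have h := hL 0 1 1 (one_mem_homog dg)
  simp only [mul_one, one_mul, pow_zero, one_smul] at h
  exact (left_eq_add.mp h)

/-- a generator-level augmentation kills the whole image of a Leibniz differential. -/
lemma aug_ext {R S : Type} [CommRing R] [CommRing S] [Algebra R S] {ι : Type} {dg : ι → ℕ}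
    {D : FreeAlgebra R ι →ₗ[R] FreeAlgebra R ι} (hL : IsLeibniz dg D)
    (ε : FreeAlgebra R ι →ₐ[R] S) (h : ∀ i, ε (D (FreeAlgebra.ι R i)) = 0) :
    ∀ x, ε (D x) = 0 := by
  have key : ∀ x : FreeAlgebra R ι,
      ε (D x) = 0 ∧ ∀ y, ε (D y) = 0 → ε (D (x * y)) = 0 := by
    intro x
    induction x using FreeAlgebra.induction with
    | grade0 r =>
      constructor
      · rw [Algebra.algebraMap_eq_smul_one, map_smul, map_smul, D_one_eq_zero hL, map_zero,
          smul_zero]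
      · intro y hy
        rw [Algebra.algebraMap_eq_smul_one, smul_mul_assoc, one_mul, map_smul, map_smul,
          hy, smul_zero]
    | grade1 g =>
      refine ⟨h g, fun y hy => ?_⟩
      rw [hL (dg g) _ y (ι_mem_homog dg g), map_add, map_mul, h g, zero_mul,
        map_zsmul, map_mul, hy, mul_zero, smul_zero, add_zero]
    | mul a b ha hb =>
      refine ⟨ha.2 b hb.1, fun y hy => ?_⟩
      rw [mul_assoc]
      exact ha.2 _ (hb.2 y hy)
    | add a b ha hb =>
      refine ⟨by rw [map_add, map_add, ha.1, hb.1, add_zero], fun y hy => ?_⟩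
      rw [add_mul, map_add, map_add, ha.2 y hy, hb.2 y hy, add_zero]
  exact fun x => (key x).1

/-! ### augmentations and stable tame isomorphism -/

/-- a generator-level augmentation of a free DGA into `S`. -/
def AugOn {R : Type} [CommRing R] (S : Type) [CommRing S] [Algebra R S] (G : FDGA R) :
    Prop :=
  ∃ ε : FreeAlgebra R G.ι →ₐ[R] S, ∀ i, ε (G.D (FreeAlgebra.ι R i)) = 0

lemma augOn_iff_of_stab {R S : Type} [CommRing R] [CommRing S] [Algebra R S]
    {G G' : FDGA R} (h : IsStabOf G' G) : AugOn S G ↔ AugOn S G' := by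
  obtain ⟨d, e, hdg, hdgt, hdgf, hL', hDi, hDt, hDf⟩ := h
  constructor
  · rintro ⟨ε, hε⟩
    refine ⟨FreeAlgebra.lift R
      (fun j => Sum.elim (fun i => ε (FreeAlgebra.ι R i)) (fun _ => (0 : S)) (e j)), ?_⟩
    set ε' : FreeAlgebra R G'.ι →ₐ[R] S := FreeAlgebra.lift R
      (fun j => Sum.elim (fun i => ε (FreeAlgebra.ι R i)) (fun _ => (0 : S)) (e j)) with hε'
    intro j
    have hj : j = e.symm (e j) := (e.symm_apply_apply j).symm
    rcases hs : e j with i | b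
    · have hj' : j = e.symm (Sum.inl i) := by rw [hj, hs]
      have comp_eq : ε'.comp (relabelHom R (fun i : G.ι => e.symm (Sum.inl i))) = ε := by
        apply FreeAlgebra.hom_ext
        funext i
        simp [relabelHom, ε', FreeAlgebra.lift_ι_apply]
      rw [hj', hDi i, ← AlgHom.comp_apply, comp_eq]
      exact hε i
    · cases b
      · rw [hj, hs, hDf, map_zero]
      · rw [hj, hs, hDt]
        simp [ε', FreeAlgebra.lift_ι_apply]
  · rintro ⟨ε', hε'⟩
    refine ⟨ε'.comp (relabelHom R (fun i : G.ι => e.symm (Sum.inl i))), fun i => ?_⟩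
    rw [AlgHom.comp_apply, ← hDi i]
    exact hε' _

lemma augOn_iff_of_chain {R S : Type} [CommRing R] [CommRing S] [Algebra R S]
    {G G₁ : FDGA R}
    (h : Relation.ReflTransGen (fun X Y : FDGA R => IsStabOf Y X) G G₁) :
    AugOn S G ↔ AugOn S G₁ := by
  induction h with
  | refl => exact Iff.rfl
  | tail h₁ h₂ ih => exact ih.trans (augOn_iff_of_stab h₂)

lemma leib_of_chain {R : Type} [CommRing R] {G G₁ : FDGA R}
    (h : Relation.ReflTransGen (fun X Y : FDGA R => IsStabOf Y X) G G₁)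
    (hG : IsLeibniz G.dg G.D) : IsLeibniz G₁.dg G₁.D := by
  induction h with
  | refl => exact hG
  | tail h₁ h₂ ih =>
    obtain ⟨d, e, _, _, _, hL, _⟩ := h₂
    exact hL

/-- existence of a (generator-level) augmentation is a stable tame invariant. -/
lemma not_stableTame_of_aug {R S : Type} [CommRing R] [CommRing S] [Algebra R S]
    {G G' : FDGA R} (hG : IsLeibniz G.dg G.D) (hA : AugOn S G) (hA' : ¬ AugOn S G') :
    ¬ IsStableTame G G' := by
  rintro ⟨G₁, G₂, ch1, ch2, Θ, _, hcomm⟩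
  have h1 : AugOn S G₁ := (augOn_iff_of_chain ch1).1 hA
  have hL1 := leib_of_chain ch1 hG
  obtain ⟨ε, hε⟩ := h1
  have hfull := aug_ext hL1 ε hε
  have h2 : AugOn S G₂ := by
    refine ⟨ε.comp Θ.symm.toAlgHom, fun j => ?_⟩
    rw [AlgHom.comp_apply]
    have h3 : Θ.symm (G₂.D (FreeAlgebra.ι R j)) = G₁.D (Θ.symm (FreeAlgebra.ι R j)) := by
      apply Θ.injective
      rw [Θ.apply_symm_apply, hcomm, Θ.apply_symm_apply]
    rw [AlgEquiv.toAlgHom_eq_coe, AlgEquiv.coe_toAlgHom, h3]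
    exact hfull _
  exact hA' ((augOn_iff_of_chain ch2).2 h2)

/-! ### a left-coefficient extraction in free algebras -/

/-- helper for `stripHd`. -/
def hdFun {R : Type} [CommRing R] {ι : Type} (g₀ : ι) :
    List ι → MonoidAlgebra R (FreeMonoid ι)
  | [] => 0
  | g :: t => if g = g₀ then MonoidAlgebra.single (FreeMonoid.ofList t) 1 else 0

/-- strips a leading `g₀` from every word, killing the other words. -/
def stripHd {R : Type} [CommRing R] {ι : Type} (g₀ : ι) :
    MonoidAlgebra R (FreeMonoid ι) →ₗ[R] MonoidAlgebra R (FreeMonoid ι) :=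
  (Finsupp.lsum R fun w => LinearMap.toSpanSingleton R _ (hdFun g₀ (FreeMonoid.toList w))) ∘ₗ
    (MonoidAlgebra.coeffLinearEquiv R).toLinearMap

lemma stripHd_of_mul {R : Type} [CommRing R] {ι : Type} (g₀ g : ι)
    (Z : MonoidAlgebra R (FreeMonoid ι)) :
    stripHd g₀ (MonoidAlgebra.single (FreeMonoid.of g) 1 * Z) =
      if g = g₀ then Z else 0 := by
  induction Z using MonoidAlgebra.induction_linear with
  | zero => rw [mul_zero, map_zero]; split <;> rfl
  | add f g' hf hg => rw [mul_add, map_add, hf, hg]; split <;> simp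
  | single w c =>
    rw [MonoidAlgebra.single_mul_single, one_mul]
    show (Finsupp.lsum R fun w => LinearMap.toSpanSingleton R (MonoidAlgebra R (FreeMonoid ι))
      (hdFun g₀ (FreeMonoid.toList w))) (Finsupp.single (FreeMonoid.of g * w) c) = _
    erw [Finsupp.lsum_single]
    rw [LinearMap.toSpanSingleton_apply]
    have hl : FreeMonoid.toList (FreeMonoid.of g * w) = g :: FreeMonoid.toList w := by
      rw [FreeMonoid.toList_mul, FreeMonoid.toList_of]
      rfl
    rw [hl]
    show c • (if g = g₀ then MonoidAlgebra.single (FreeMonoid.ofList (FreeMonoid.toList w)) 1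
      else 0) = _
    split
    · rw [FreeMonoid.ofList_toList]
      simp [MonoidAlgebra.smul_single']
    · simp

lemma left_factor_zero {R : Type} [CommRing R] {ι : Type} {g₀ g₂ : ι} (hne : g₀ ≠ g₂)
    {X Y : FreeAlgebra R ι}
    (heq : FreeAlgebra.ι R g₀ * X + FreeAlgebra.ι R g₂ * Y = 0) : X = 0 := by
  set E := FreeAlgebra.equivMonoidAlgebraFreeMonoid (R := R) (X := ι) with hE
  have hEι : ∀ g : ι, E (FreeAlgebra.ι R g) = MonoidAlgebra.single (FreeMonoid.of g) 1 := by
    intro g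
    simp [hE, FreeAlgebra.equivMonoidAlgebraFreeMonoid, FreeAlgebra.lift_ι_apply,
      MonoidAlgebra.of_apply]
  have h0 := congrArg E heq
  rw [map_add, map_mul, map_mul, map_zero, hEι, hEι] at h0
  have h1 := congrArg (stripHd g₀) h0
  rw [map_add, map_zero, stripHd_of_mul, stripHd_of_mul, if_pos rfl,
    if_neg (Ne.symm hne), add_zero] at h1
  exact E.injective (by rw [h1, map_zero])

end Aux

section Spec

lemma lm_mul_lm (a b c d : ℤ) : lm a b * lm c d = lm (a + c) (b + d) := by
  unfold lm
  rw [AddMonoidAlgebra.single_mul_single, one_mul]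
  rfl

lemma lmwC_eq (wz : ℤ) : lmwC (0 : Fin 1) wz = lamC 0 1 * muC 0 wz := by
  unfold lmwC lamC muC
  rw [AddMonoidAlgebra.single_mul_single, one_mul]
  congr 1
  simp [Prod.ext_iff]

lemma cm_mul {n r : ℕ} (x y : Rr r) : (cm (x * y) : FA n r) = cm x * cm y :=
  map_mul (algebraMap (Rr r) (FA n r)) x y

/-- `Q₀₀ = 0` for the braid word `σ₁⁻¹`. -/
lemma Q00_eq_zero (data : TransData 2 1 wSigma1Inv) : data.Q 0 0 = 0 := by
  set k : SIdx 3 := embS ⟨(0 : Fin 2), by omega⟩ with hkdef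
  obtain ⟨k', hk', c1, c2, c3, c4, c5, c6, c7, c8, c9, c10, c11, c12, c13⟩ := data.hφs k
  have hk1 : k.1 = (1 : Fin 3) := rfl
  have hk'2 : k' = (2 : Fin 3) := by
    apply Fin.ext
    rw [hk']
    rfl
  subst hk'2
  have hval : (data.φs k : Atil 3 →+* Atil 3) (aG (0 : Fin 3) 2) = aG 0 1 := by
    have h := c4 0 (by rw [hk1]; decide) (by decide)
    rw [hk1] at h
    exact h
  have hQ0 := data.hQ 0
  rw [Fin.sum_univ_two] at hQ0
  have hw : embW wSigma1Inv = [(k, false)] := rfl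
  rw [hw] at hQ0
  have hph : phiW data.φs [(k, false)] = (data.φs k)⁻¹ := by
    simp [phiW]
  rw [hph] at hQ0
  have hs0 : ((0 : Fin 2).succ : Fin 3) = 1 := rfl
  have hs1 : ((1 : Fin 2).succ : Fin 3) = 2 := rfl
  rw [hs0, hs1] at hQ0
  have hinv : (data.φs k)⁻¹ (aG (0 : Fin 3) 1) = aG 0 2 := by
    rw [← hval]
    show (data.φs k).symm ((data.φs k) (aG (0 : Fin 3) 2)) = aG 0 2
    exact RingEquiv.symm_apply_apply _ _
  rw [hinv] at hQ0
  have h01 : (0 : Fin 3) ≠ 1 := by decide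
  have h02 : (0 : Fin 3) ≠ 2 := by decide
  have e1 : aG (0 : Fin 3) 1 = FreeAlgebra.ι (LaurN 3) (⟨((0 : Fin 3), 1), h01⟩ : OffD 3) :=
    dif_neg h01
  have e2 : aG (0 : Fin 3) 2 = FreeAlgebra.ι (LaurN 3) (⟨((0 : Fin 3), 2), h02⟩ : OffD 3) :=
    dif_neg h02
  have key : FreeAlgebra.ι (LaurN 3) (⟨((0 : Fin 3), 1), h01⟩ : OffD 3) * data.Q 0 0 +
      FreeAlgebra.ι (LaurN 3) (⟨((0 : Fin 3), 2), h02⟩ : OffD 3) * (data.Q 1 0 - 1) = 0 := by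
    rw [mul_sub, mul_one, ← e1, ← e2]
    calc aG (0 : Fin 3) 1 * data.Q 0 0 + (aG (0 : Fin 3) 2 * data.Q 1 0 - aG 0 2)
        = (aG (0 : Fin 3) 1 * data.Q 0 0 + aG (0 : Fin 3) 2 * data.Q 1 0) - aG 0 2 := by
          rw [add_sub_assoc]
      _ = aG (0 : Fin 3) 2 - aG 0 2 := by rw [← hQ0]
      _ = 0 := sub_self _
  refine left_factor_zero ?_ key
  intro hcontr
  have h12 := congrArg (fun p : OffD 3 => p.1.2) hcontr
  simp only at h12
  exact absurd h12 (by decide)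

lemma wri_sigma (α : Fin 2 → Fin 1) (m : Fin 1) : wri α m wSigma1Inv = -1 := by
  show wriAux α m wSigma1Inv 1 = -1
  rw [wSigma1Inv]
  show (if α _ = m ∧ α _ = m then (if false then (1 : ℤ) else -1) else 0) +
    wriAux α m [] _ = -1
  rw [if_pos ⟨Subsingleton.elim _ _, Subsingleton.elim _ _⟩]
  show (if false then (1 : ℤ) else -1) + 0 = -1
  norm_num

lemma lamMat_00 (α : Fin 2 → Fin 1) :
    lamMat wSigma1Inv α 0 0 = (cm (lmwC (α 0) (-1)) : FA 2 1) := by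
  rw [lamMat, Matrix.diagonal_apply_eq,
    if_pos (show leading α 0 from fun j _ => Fin.zero_le j), wri_sigma]

lemma lamMat_10 (α : Fin 2 → Fin 1) : lamMat wSigma1Inv α 1 0 = 0 := by
  rw [lamMat]
  exact Matrix.diagonal_apply_ne _ (by decide)

/-- the value of the differential on `c₀₀` for the braid word `σ₁⁻¹`. -/
lemma Dc00 (data : TransData 2 1 wSigma1Inv) :
    data.D (FreeAlgebra.ι (Rr 1) (GenIdx.c 0 0)) =
      cm ((1 + muC (data.α 0) 1 * Vc) * lmwC (data.α 0) (-1)) +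
        cm Uc * Xa 0 1 * data.θ (data.Q 1 0) := by
  have h := data.hDC 0 0
  have hC : (Cmat (n := 2) (r := 1)) 0 0 = FreeAlgebra.ι (Rr 1) (GenIdx.c 0 0) := rfl
  rw [hC] at h
  rw [h, Matrix.add_apply, Matrix.mul_apply, Matrix.mul_apply, Fin.sum_univ_two,
    Fin.sum_univ_two, lamMat_00, lamMat_10, mul_zero, add_zero]
  have hQ00 : (data.Q.map data.θ) 0 0 = 0 := by
    rw [Matrix.map_apply, Q00_eq_zero data, map_zero]
  rw [hQ00, mul_zero, zero_add]
  have hAV : (AVmat (n := 2) data.α) 0 0 = cm (1 + muC (data.α 0) 1 * Vc) := if_pos rfl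
  have hAU : (AUmat (n := 2) data.α) 0 1 = cm Uc * Xa 0 1 := by
    show (if (0 : Fin 2) = 1 then _ else if (0 : Fin 2) < 1 then cm Uc * Xa 0 1 else _) = _
    rw [if_neg (by decide), if_pos (by decide)]
  rw [hAV, hAU, Matrix.map_apply, cm_mul]

/-- the `σ₁⁻¹` DGA specialized at `U = V = 0` has no augmentation to `RL/(λ+μ)`. -/
lemma no_aug_sigma (data : TransData 2 1 wSigma1Inv) (π : Rr 1 →+* RL)
    (hpl : ∀ z : ℤ, π (lamC 0 z) = lm z 0) (hpm : ∀ z : ℤ, π (muC 0 z) = lm 0 z)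
    (hpU : π Uc = 0) (hpV : π Vc = 0)
    (θ : FA 2 1 →+* FreeAlgebra RL (GenIdx 2))
    (hθs : ∀ x : Rr 1, θ (algebraMap _ _ x) = algebraMap _ _ (π x))
    (Dhh : FreeAlgebra RL (GenIdx 2) →ₗ[RL] FreeAlgebra RL (GenIdx 2))
    (hDgen : ∀ g : GenIdx 2, Dhh (FreeAlgebra.ι _ g) = θ (data.D (FreeAlgebra.ι _ g))) :
    ¬ AugOn (RL ⧸ Ideal.span {lm 1 0 + lm 0 1})
      (⟨GenIdx 2, gdeg, Dhh⟩ : FDGA RL) := by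
  rintro ⟨ε, hε⟩
  have h : ε (Dhh (FreeAlgebra.ι RL (GenIdx.c 0 0))) = 0 := hε (GenIdx.c 0 0)
  rw [hDgen, Dc00 data] at h
  simp only [map_add, map_mul] at h
  have hsc : ∀ x : Rr 1, ε (θ (cm x)) = algebraMap RL _ (π x) := by
    intro x
    rw [show (cm x : FA 2 1) = algebraMap _ _ x from rfl, hθs, AlgHom.commutes]
  rw [hsc, hsc, hpU, map_zero, zero_mul, zero_mul, add_zero] at h
  have hα : data.α 0 = 0 := Subsingleton.elim _ _
  rw [hα] at h
  have hpval : π ((1 + muC 0 1 * Vc) * lmwC 0 (-1)) = lm 1 (-1) := by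
    rw [map_mul, map_add, map_one, map_mul, hpm, hpV, mul_zero, add_zero, one_mul,
      lmwC_eq, map_mul, hpl, hpm, lm_mul_lm]
    norm_num
  rw [hpval, Ideal.Quotient.algebraMap_eq, Ideal.Quotient.eq_zero_iff_mem] at h
  exact lm_not_mem h

/-- the full `σ₁⁻¹` transverse DGA has no augmentation to `Rr 1 / (U, V, λ+μ)`. -/
lemma no_aug_sigma' (data : TransData 2 1 wSigma1Inv) :
    ¬ AugOn (Rr 1 ⧸ Jid) data.toF := by
  rintro ⟨(ε : FA 2 1 →ₐ[Rr 1] Rr 1 ⧸ Jid), hε⟩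
  have h : ε (data.D (FreeAlgebra.ι (Rr 1) (GenIdx.c 0 0))) = 0 := hε (GenIdx.c 0 0)
  rw [Dc00 data] at h
  simp only [map_add, map_mul] at h
  have hsc : ∀ x : Rr 1, ε ((cm x : FA 2 1)) = Ideal.Quotient.mk Jid x := by
    intro x
    have h2 := ε.commutes x
    rw [Ideal.Quotient.algebraMap_eq] at h2
    exact h2
  have hα : data.α 0 = 0 := Subsingleton.elim _ _
  rw [hsc, hsc, hα] at h
  have hV : Ideal.Quotient.mk Jid Vc = 0 :=
    Ideal.Quotient.eq_zero_iff_mem.2 (Ideal.subset_span (by simp))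
  have hU : Ideal.Quotient.mk Jid Uc = 0 :=
    Ideal.Quotient.eq_zero_iff_mem.2 (Ideal.subset_span (by simp))
  have h1 : Ideal.Quotient.mk Jid ((1 + muC 0 1 * Vc) * lmwC 0 (-1)) =
      Ideal.Quotient.mk Jid (lmwC 0 (-1)) := by
    rw [map_mul, map_add, map_one, map_mul, hV, mul_zero, add_zero, one_mul]
  rw [h1, hU, zero_mul, zero_mul, add_zero] at h
  exact lmwC_not_mem (Ideal.Quotient.eq_zero_iff_mem.1 h)

/-- the augmentation of the `(U,V)=(0,0)` unknot DGA. -/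
lemma aug_CE (Dh : FreeAlgebra RL CE →ₗ[RL] FreeAlgebra RL CE)
    (hDhc : Dh (FreeAlgebra.ι _ CE.c) = algebraMap RL _ (lm 1 0 + lm 0 1))
    (hDhe : Dh (FreeAlgebra.ι _ CE.e) = 0) :
    AugOn (RL ⧸ Ideal.span {lm 1 0 + lm 0 1}) (⟨CE, cedeg, Dh⟩ : FDGA RL) := by
  refine ⟨FreeAlgebra.lift _ (fun _ => 0), fun i => ?_⟩
  cases i
  · rw [show (⟨CE, cedeg, Dh⟩ : FDGA RL).D = Dh from rfl, hDhc, AlgHom.commutes,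
      Ideal.Quotient.algebraMap_eq, Ideal.Quotient.eq_zero_iff_mem]
    exact Ideal.subset_span rfl
  · rw [show (⟨CE, cedeg, Dh⟩ : FDGA RL).D = Dh from rfl, hDhe, map_zero]

/-- the augmentation of the unknot DGA over `Rr 1`. -/
lemma aug_D1 (D1 : FreeAlgebra (Rr 1) CE →ₗ[Rr 1] FreeAlgebra (Rr 1) CE)
    (hc : D1 (FreeAlgebra.ι _ CE.c) =
      algebraMap (Rr 1) _ (Uc + lamC 0 1 + lamC 0 1 * muC 0 1 * Vc + muC 0 1))
    (he : D1 (FreeAlgebra.ι _ CE.e) = 0) :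
    AugOn (Rr 1 ⧸ Jid) (⟨CE, cedeg, D1⟩ : FDGA (Rr 1)) := by
  refine ⟨FreeAlgebra.lift _ (fun _ => 0), fun i => ?_⟩
  cases i
  · rw [show (⟨CE, cedeg, D1⟩ : FDGA (Rr 1)).D = D1 from rfl, hc, AlgHom.commutes,
      Ideal.Quotient.algebraMap_eq, Ideal.Quotient.eq_zero_iff_mem]
    have hx : (Uc + lamC 0 1 + lamC 0 1 * muC 0 1 * Vc + muC 0 1 : Rr 1)
        = Uc + lamC 0 1 * muC 0 1 * Vc + (lamC 0 1 + muC 0 1) := by ring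
    rw [hx, Jid]
    exact add_mem (add_mem (Ideal.subset_span (by simp))
      (Ideal.mul_mem_left _ _ (Ideal.subset_span (by simp))))
      (Ideal.subset_span (by simp))
  · rw [show (⟨CE, cedeg, D1⟩ : FDGA (Rr 1)).D = D1 from rfl, he, map_zero]

end Spec

set_option maxHeartbeats 1000000 in
/-- Let `(A, ∂̂̂)` be the DGA over `ℤ[λ^{±1}, μ^{±1}]` freely
generated by `c` (degree 1) and `e` (degree 2) with `∂̂̂c = λ + μ`, `∂̂̂e = 0` (the
`(U,V) = (0,0)` specialization of the transverse DGA of the trivial 1-braid).  Its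
degree-0 homology is isomorphic to `ℤ[λ^{±1}, μ^{±1}]/(λ + μ) ≠ 0`; in particular the
homology of `(A, ∂̂̂)` is nontrivial, so `(A, ∂̂̂)` is not stable tame isomorphic to the
`(U,V) = (0,0)` specialization of the transverse DGA of `σ₁⁻¹ ∈ B₂` (whose homology
vanishes).  Hence the filtered transverse DGAs of the trivial 1-braid and of `σ₁⁻¹`
are not filtered stable tame isomorphic, distinguishing the transverse unknots of
self-linking numbers −1 and −3. -/
theorem unknot_hathat_distinguishes
    (Dh : FreeAlgebra RL CE →ₗ[RL] FreeAlgebra RL CE)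
    (hLeibh : IsLeibniz cedeg Dh)
    (hDhc : Dh (FreeAlgebra.ι _ CE.c) = algebraMap RL _ (lm 1 0 + lm 0 1))
    (hDhe : Dh (FreeAlgebra.ι _ CE.e) = 0) :
    (Nonempty (H0 cedeg Dh ≃ₗ[RL] (RL ⧸ Ideal.span {lm 1 0 + lm 0 1})) ∧
      Nontrivial (RL ⧸ Ideal.span {lm 1 0 + lm 0 1}) ∧
      Nontrivial (H0 cedeg Dh) ∧
      (∃ x : FreeAlgebra RL CE, Dh x = 0 ∧ x ∉ Set.range Dh)) ∧
    (∀ (data : TransData 2 1 wSigma1Inv)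
      (π : Rr 1 →+* RL),
      (∀ z : ℤ, π (lamC 0 z) = lm z 0) → (∀ z : ℤ, π (muC 0 z) = lm 0 z) →
      π Uc = 0 → π Vc = 0 →
      ∀ (θ : FA 2 1 →+* FreeAlgebra RL (GenIdx 2)),
      (∀ x : Rr 1, θ (algebraMap _ _ x) = algebraMap _ _ (π x)) →
      (∀ g : GenIdx 2, θ (FreeAlgebra.ι _ g) = FreeAlgebra.ι _ g) →
      ∀ (Dhh : FreeAlgebra RL (GenIdx 2) →ₗ[RL] FreeAlgebra RL (GenIdx 2)),
      IsLeibniz gdeg Dhh →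
      (∀ g : GenIdx 2, Dhh (FreeAlgebra.ι _ g) = θ (data.D (FreeAlgebra.ι _ g))) →
      ¬ IsStableTame (⟨CE, cedeg, Dh⟩ : FDGA RL) (⟨GenIdx 2, gdeg, Dhh⟩ : FDGA RL)) ∧
    (∀ (D1 : FreeAlgebra (Rr 1) CE →ₗ[Rr 1] FreeAlgebra (Rr 1) CE),
      IsLeibniz cedeg D1 →
      D1 (FreeAlgebra.ι _ CE.c) =
        algebraMap (Rr 1) _ (Uc + lamC 0 1 + lamC 0 1 * muC 0 1 * Vc + muC 0 1) →
      D1 (FreeAlgebra.ι _ CE.e) = 0 →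
      ∀ (data : TransData 2 1 wSigma1Inv),
        ¬ IsStableTame (⟨CE, cedeg, D1⟩ : FDGA (Rr 1)) data.toF) := by
  have hI : Ideal.span {lm 1 0 + lm 0 1} ≠ ⊤ := by
    intro hT
    exact one_not_mem (hT ▸ Submodule.mem_top)
  haveI hSnt : Nontrivial (RL ⧸ Ideal.span {lm 1 0 + lm 0 1}) :=
    Ideal.Quotient.nontrivial_iff.mpr hI
  obtain ⟨ε₀, hε₀⟩ := aug_CE Dh hDhc hDhe
  have hfull : ∀ x, ε₀ (Dh x) = 0 := aug_ext hLeibh ε₀ hε₀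
  have hEq : Nonempty (H0 cedeg Dh ≃ₗ[RL] (RL ⧸ Ideal.span {lm 1 0 + lm 0 1})) := by
    -- the homology computation
    have hhom0 : homog RL cedeg 0 = Submodule.span RL {1} := by
      have hset : {x : FreeAlgebra RL CE | ∃ l : List CE, (l.map cedeg).sum = 0 ∧
          x = (l.map (FreeAlgebra.ι RL)).prod} = {1} := by
        ext x
        constructor
        · rintro ⟨l, hs, rfl⟩
          cases l with
          | nil => simp
          | cons a t => cases a <;> simp [cedeg] at hs
        · rintro rfl
          exact ⟨[], by simp, by simp⟩
      rw [homog, hset]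
    have hZmem : ∀ r : RL, (algebraMap RL (FreeAlgebra RL CE)) r ∈ Z0 cedeg Dh := by
      intro r
      refine Submodule.mem_inf.2 ⟨?_, ?_⟩
      · rw [hhom0, Algebra.algebraMap_eq_smul_one]
        exact Submodule.smul_mem _ r (Submodule.mem_span_singleton_self 1)
      · rw [LinearMap.mem_ker, Algebra.algebraMap_eq_smul_one, map_smul,
          D_one_eq_zero hLeibh, smul_zero]
    set f : RL →ₗ[RL] Z0 cedeg Dh :=
      LinearMap.codRestrict _ (Algebra.linearMap RL (FreeAlgebra RL CE)) hZmem with hf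
    have hinj : Function.Injective f := by
      intro a b hab
      have h2 : algebraMap RL (FreeAlgebra RL CE) a = algebraMap RL (FreeAlgebra RL CE) b :=
        congrArg Subtype.val hab
      exact FreeAlgebra.algebraMap_leftInverse.injective h2
    have hsurj : Function.Surjective f := by
      rintro ⟨z, hz⟩
      have hz1 : z ∈ Submodule.span RL {1} := by
        have h2 := (Submodule.mem_inf.1 hz).1
        rwa [hhom0] at h2
      obtain ⟨r, hr⟩ := Submodule.mem_span_singleton.1 hz1
      refine ⟨r, Subtype.ext ?_⟩
      show algebraMap RL (FreeAlgebra RL CE) r = z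
      rw [Algebra.algebraMap_eq_smul_one]
      exact hr
    set e : RL ≃ₗ[RL] Z0 cedeg Dh := LinearEquiv.ofBijective f ⟨hinj, hsurj⟩ with he
    have hmap : Submodule.map (e : RL →ₗ[RL] Z0 cedeg Dh)
        (Ideal.span {lm 1 0 + lm 0 1}) = B0 cedeg Dh := by
      ext z
      rw [Submodule.mem_map]
      constructor
      · rintro ⟨r, hrI, hfr⟩
        obtain ⟨s, hs⟩ := Submodule.mem_span_singleton.1 hrI
        rw [B0, Submodule.mem_comap, LinearMap.mem_range]
        refine ⟨s • FreeAlgebra.ι RL CE.c, ?_⟩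
        have hzval : (z : FreeAlgebra RL CE) = algebraMap RL (FreeAlgebra RL CE) r := by
          rw [← hfr]; rfl
        rw [map_smul, hDhc, Submodule.subtype_apply, hzval, ← hs]
        rw [smul_eq_mul, map_mul, Algebra.smul_def]
      · intro hzB
        rw [B0, Submodule.mem_comap, LinearMap.mem_range] at hzB
        obtain ⟨x, hx⟩ := hzB
        have hz1 : (z : FreeAlgebra RL CE) ∈ Submodule.span RL {1} := by
          have h2 := (Submodule.mem_inf.1 z.2).1
          rwa [hhom0] at h2
        obtain ⟨r, hr⟩ := Submodule.mem_span_singleton.1 hz1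
        have hzval : (z : FreeAlgebra RL CE) = algebraMap RL (FreeAlgebra RL CE) r := by
          rw [Algebra.algebraMap_eq_smul_one]; exact hr.symm
        refine ⟨r, ?_, Subtype.ext (by
          show algebraMap RL (FreeAlgebra RL CE) r = (z : FreeAlgebra RL CE)
          exact hzval.symm)⟩
        have h3 : ε₀ (Dh x) = 0 := hfull x
        rw [hx, Submodule.subtype_apply, hzval, AlgHom.commutes,
          Ideal.Quotient.algebraMap_eq, Ideal.Quotient.eq_zero_iff_mem] at h3
        exact h3
    have E := (Submodule.Quotient.equiv (R := RL) (M := RL) (N := Z0 cedeg Dh)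
      (Ideal.span {lm 1 0 + lm 0 1} : Ideal RL) (B0 cedeg Dh) e hmap).symm
    exact ⟨E⟩
  refine ⟨⟨hEq, hSnt, ?_, ?_⟩, ?_, ?_⟩
  case _ =>
    obtain ⟨Φ⟩ := hEq
    exact Φ.toEquiv.nontrivial
  case _ =>
    refine ⟨1, D_one_eq_zero hLeibh, ?_⟩
    rintro ⟨y, hy⟩
    have h2 := hfull y
    rw [hy, map_one] at h2
    exact one_ne_zero h2
  case _ =>
    intro data π h1 h2 h3 h4 θ h5 h6 Dhh h7 h8
    exact not_stableTame_of_aug hLeibh (aug_CE Dh hDhc hDhe)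
      (no_aug_sigma data π h1 h2 h3 h4 θ h5 Dhh h8)
  case _ =>
    intro D1 hL1 hc he data
    exact not_stableTame_of_aug hL1 (aug_D1 D1 hc he) (no_aug_sigma' data)
end
end
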